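/- arXiv:2603.24305 — 6 statements merged into one kernel-verified Lean document; each statement's English description precedes it below -/
import Mathlib

section
/- Let G be a connected chordal graph, K a clique in G, C a connected component of G − K, and S = N(C) the set of vertices of K with a neighbour in C. Then for every vertex v ∈ C whose set of neighbours in S is a proper subset of S, there exists a vertex w ∈ C such that the neighbours of v in S form a proper subset of the neighbours of w in S. -/
open SimpleGraph

variable {V W : Type*}

/-- `G` contains no induced cycle of length at least four. -/
def IsChordal (G : SimpleGraph V) : Prop :=
  ∀ (n : ℕ), 4 ≤ n → ∀ f : ZMod n → V, Function.Injective f →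
    (∀ i j : ZMod n, G.Adj (f i) (f j) ↔ j = i + 1 ∨ i = j + 1) → False

/-- The set of vertices outside `C` having a neighbour in `C`. -/
def nbhdSet (G : SimpleGraph V) (C : Set V) : Set V :=
  {v | v ∉ C ∧ ∃ u ∈ C, G.Adj u v}

/-- `C` is a connected component of `G - S`. -/
def IsCompOutside (G : SimpleGraph V) (S C : Set V) : Prop :=
  C.Nonempty ∧ Disjoint C S ∧ (G.induce C).Connected ∧
    ∀ u ∈ C, ∀ v, G.Adj u v → v ∉ S → v ∈ C

/-- A strict comb of cliques. -/
def HasStrictCombOfCliques (G : SimpleGraph V) : Prop :=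
  ∃ v : ℕ → V, Function.Injective v ∧ (∀ i j, i ≠ j → G.Adj (v i) (v j)) ∧
    ∀ i : ℕ, 0 < i → ∃ w, (∀ j, j < i → G.Adj w (v j)) ∧ (∀ j, i ≤ j → ¬ G.Adj w (v j))

/-- Every walk from `A` to `B` meets `S`. -/
def Separates (G : SimpleGraph V) (A B S : Set V) : Prop :=
  ∀ a ∈ A, ∀ b ∈ B, ∀ p : G.Walk a b, ∃ x ∈ p.support, x ∈ S

/-- `S` is a minimal `A`–`B` separator. -/
def IsMinimalSeparator (G : SimpleGraph V) (A B S : Set V) : Prop :=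
  Separates G A B S ∧ ∀ S' ⊆ S, Separates G A B S' → S' = S

/-- `S` is a minimal `a`–`b` separator (containing neither `a` nor `b`). -/
def IsMinimalVxSeparator (G : SimpleGraph V) (a b : V) (S : Set V) : Prop :=
  a ∉ S ∧ b ∉ S ∧ Separates G {a} {b} S ∧ ∀ S' ⊆ S, Separates G {a} {b} S' → S' = S

/-- A tree-decomposition of `G` with decomposition tree `T` and bags `bag`. -/
def IsTreeDecomp {ι : Type*} (G : SimpleGraph V) (T : SimpleGraph ι) (bag : ι → Set V) : Prop :=
  T.IsTree ∧ (∀ v, ∃ t, v ∈ bag t) ∧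
    (∀ u v, G.Adj u v → ∃ t, u ∈ bag t ∧ v ∈ bag t) ∧
    ∀ v, (T.induce {t | v ∈ bag t}).Connected

/-- `H` is an induced minor of `G`. -/
def IsInducedMinor (H : SimpleGraph W) (G : SimpleGraph V) : Prop :=
  ∃ B : W → Set V, (∀ w, (B w).Nonempty) ∧ (∀ w, (G.induce (B w)).Connected) ∧
    (Pairwise fun u w => Disjoint (B u) (B w)) ∧
    ∀ u w, u ≠ w → ((∃ x ∈ B u, ∃ y ∈ B w, G.Adj x y) ↔ H.Adj u w)

/-- The graph `𝓗`: a countably infinite clique together with two non-adjacent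
dominating vertices. -/
def HGraph : SimpleGraph (ℕ ⊕ Bool) where
  Adj x y := match x, y with
    | .inl i, .inl j => i ≠ j
    | .inl _, .inr _ => True
    | .inr _, .inl _ => True
    | .inr _, .inr _ => False
  symm := by
    constructor
    rintro (i | a) (j | b) h <;> simp_all
    exact fun h' => h h'.symm
  loopless := by
    constructor
    rintro (i | a) h <;> simp_all

/-- `u` lies on the path from `r` to `v` in the tree `T`; this is the tree-order. -/
def TreeLE (T : SimpleGraph V) (r u v : V) : Prop :=
  ∀ p : T.Walk r v, p.IsPath → u ∈ p.support

/-- `T` is a normal spanning tree of `G` with root `r`. -/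
def IsNormalSpanningTree (G T : SimpleGraph V) (r : V) : Prop :=
  T ≤ G ∧ T.IsTree ∧ ∀ u v, G.Adj u v → TreeLE T r u v ∨ TreeLE T r v u

lemma isChordal_no_cycle {G : SimpleGraph V} (hch : IsChordal G) (n : ℕ) (hn : 4 ≤ n)
    (g : ℕ → V)
    (hinj : ∀ i < n, ∀ j < n, g i = g j → i = j)
    (hadj : ∀ i < n, ∀ j < n, (G.Adj (g i) (g j) ↔
      (j = i + 1 ∨ i = j + 1 ∨ (i = 0 ∧ j = n - 1) ∨ (j = 0 ∧ i = n - 1)))) : False := by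
  haveI : NeZero n := ⟨by omega⟩
  haveI : Fact (1 < n) := ⟨by omega⟩
  have key : ∀ a b : ZMod n, b = a + 1 ↔ (b.val = a.val + 1 ∨ (b.val = 0 ∧ a.val = n - 1)) := by
    intro a b
    have hval : (a + 1).val = (a.val + 1) % n := by rw [ZMod.val_add, ZMod.val_one]
    have ha := ZMod.val_lt a
    have hb := ZMod.val_lt b
    constructor
    · rintro rfl
      rw [hval]
      rcases Nat.lt_or_ge (a.val + 1) n with h | h
      · left; exact Nat.mod_eq_of_lt h
      · right
        have : a.val + 1 = n := by omega
        rw [this, Nat.mod_self]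
        omega
    · intro h
      apply ZMod.val_injective
      rw [hval]
      rcases h with h | ⟨h1, h2⟩
      · rw [h, Nat.mod_eq_of_lt (by omega)]
      · rw [h1, h2]
        have : n - 1 + 1 = n := by omega
        rw [this, Nat.mod_self]
  apply hch n hn (fun i => g i.val)
  · intro i j hij
    exact ZMod.val_injective n (hinj _ (ZMod.val_lt i) _ (ZMod.val_lt j) hij)
  · intro i j
    rw [hadj _ (ZMod.val_lt i) _ (ZMod.val_lt j), key i j, key j i]
    have hi := ZMod.val_lt i
    have hj := ZMod.val_lt j
    tauto

lemma no_cycle_through {G : SimpleGraph V} (hch : IsChordal G) (m : ℕ) (hm : 2 ≤ m)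
    (t : V) (y : ℕ → V)
    (hinj : ∀ i ≤ m, ∀ j ≤ m, y i = y j → i = j)
    (ht : ∀ i ≤ m, t ≠ y i)
    (hpath : ∀ i ≤ m, ∀ j ≤ m, (G.Adj (y i) (y j) ↔ (j = i + 1 ∨ i = j + 1)))
    (hty : ∀ i ≤ m, (G.Adj t (y i) ↔ (i = 0 ∨ i = m))) : False := by
  apply isChordal_no_cycle hch (m + 2) (by omega) (fun i => if i = 0 then t else y (i - 1))
  · intro i hi j hj hij
    by_cases hi0 : i = 0 <;> by_cases hj0 : j = 0
    · omega
    · rw [if_pos hi0, if_neg hj0] at hij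
      exact absurd hij (ht (j-1) (by omega))
    · rw [if_neg hi0, if_pos hj0] at hij
      exact absurd hij.symm (ht (i-1) (by omega))
    · rw [if_neg hi0, if_neg hj0] at hij
      have := hinj (i-1) (by omega) (j-1) (by omega) hij
      omega
  · intro i hi j hj
    by_cases hi0 : i = 0 <;> by_cases hj0 : j = 0
    · subst hi0; subst hj0
      rw [if_pos rfl]
      simp only [SimpleGraph.irrefl]
      constructor
      · intro h; exact h.elim
      · intro h; omega
    · subst hi0
      rw [if_pos rfl, if_neg hj0, hty (j-1) (by omega)]
      omega
    · subst hj0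
      rw [if_pos rfl, if_neg hi0, G.adj_comm, hty (i-1) (by omega)]
      omega
    · rw [if_neg hi0, if_neg hj0, hpath (i-1) (by omega) (j-1) (by omega)]
      omega

lemma main_aux {G : SimpleGraph V} (hch : IsChordal G) {K C : Set V}
    (hK : G.IsClique K) (hC : IsCompOutside G K C) {s : V} (hsC : s ∉ C) (hsK : s ∈ K) :
    ∀ k : ℕ, ∀ v ∈ C, ¬ G.Adj v s →
      (∃ x : ℕ → V, x 0 = v ∧ (∀ i, x i ∈ C) ∧ (∀ i < k, G.Adj (x i) (x (i+1))) ∧ G.Adj (x k) s) →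
      ∃ w ∈ C, G.Adj w s ∧ ∀ t, t ∈ nbhdSet G C → G.Adj v t → G.Adj w t := by
  classical
  intro k
  induction k using Nat.strong_induction_on with
  | _ k IH =>
  intro v hv hvs hgood
  by_cases hmin : ∃ m, m < k ∧ ∃ x : ℕ → V, x 0 = v ∧ (∀ i, x i ∈ C) ∧
      (∀ i < m, G.Adj (x i) (x (i+1))) ∧ G.Adj (x m) s
  · obtain ⟨m, hm, hx⟩ := hmin
    exact IH m hm v hv hvs hx
  push_neg at hmin
  obtain ⟨x, hx0, hxC, hxadj, hxs⟩ := hgood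
  have hk1 : 1 ≤ k := by
    rcases Nat.eq_zero_or_pos k with rfl | h
    · exact absurd (hx0 ▸ hxs) hvs
    · exact h
  have hno_s : ∀ i < k, ¬ G.Adj (x i) s := fun i hi =>
    hmin i hi x hx0 hxC (fun j hj => hxadj j (by omega))
  have hne : ∀ i j, i < j → j ≤ k → x i ≠ x j := by
    intro i j hij hjk heq
    obtain ⟨d, rfl⟩ : ∃ d, j = i + 1 + d := ⟨j - i - 1, by omega⟩
    obtain ⟨e, rfl⟩ : ∃ e, k = i + 1 + d + e := ⟨k - (i + 1 + d), by omega⟩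
    refine hmin (i + e) (by omega) (fun m => if m ≤ i then x m else x (m + d + 1)) ?_ ?_ ?_ ?_
    · simp only [if_pos (Nat.zero_le i)]
      exact hx0
    · intro m; split <;> exact hxC _
    · intro m hm
      rcases Nat.lt_or_ge m i with h1 | h1
      · simp only [if_pos (by omega : m ≤ i), if_pos (by omega : m + 1 ≤ i)]
        exact hxadj m (by omega)
      · rcases Nat.eq_or_lt_of_le h1 with h2 | h2
        · simp only [if_pos (by omega : m ≤ i), if_neg (by omega : ¬ m + 1 ≤ i)]
          rw [← h2, heq]
          exact hxadj (i + 1 + d) (by omega)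
        · simp only [if_neg (by omega : ¬ m ≤ i), if_neg (by omega : ¬ m + 1 ≤ i)]
          have h3 : m + 1 + d + 1 = (m + d + 1) + 1 := by omega
          rw [h3]
          exact hxadj (m + d + 1) (by omega)
    · rcases Nat.eq_zero_or_pos e with he | he
      · subst he
        simp only [if_pos (by omega : i + 0 ≤ i)]
        have h3 : i + 0 = i := rfl
        rw [h3, heq]
        exact hxs
      · simp only [if_neg (by omega : ¬ i + e ≤ i)]
        have h3 : i + e + d + 1 = i + 1 + d + e := by omega
        rw [h3]
        exact hxs
  have hchord : ∀ i j, i + 2 ≤ j → j ≤ k → ¬ G.Adj (x i) (x j) := by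
    intro i j hij hjk hadj
    obtain ⟨d, rfl⟩ : ∃ d, j = i + 2 + d := ⟨j - i - 2, by omega⟩
    obtain ⟨e, rfl⟩ : ∃ e, k = i + 2 + d + e := ⟨k - (i + 2 + d), by omega⟩
    refine hmin (i + 1 + e) (by omega) (fun m => if m ≤ i then x m else x (m + d + 1))
      ?_ ?_ ?_ ?_
    · simp only [if_pos (Nat.zero_le i)]
      exact hx0
    · intro m; split <;> exact hxC _
    · intro m hm
      rcases Nat.lt_or_ge m i with h1 | h1
      · simp only [if_pos (by omega : m ≤ i), if_pos (by omega : m + 1 ≤ i)]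
        exact hxadj m (by omega)
      · rcases Nat.eq_or_lt_of_le h1 with h2 | h2
        · simp only [if_pos (by omega : m ≤ i), if_neg (by omega : ¬ m + 1 ≤ i)]
          rw [← h2]
          have h3 : i + 1 + d + 1 = i + 2 + d := by omega
          rw [h3]
          exact hadj
        · simp only [if_neg (by omega : ¬ m ≤ i), if_neg (by omega : ¬ m + 1 ≤ i)]
          have h3 : m + 1 + d + 1 = (m + d + 1) + 1 := by omega
          rw [h3]
          exact hxadj (m + d + 1) (by omega)
    · simp only [if_neg (by omega : ¬ i + 1 + e ≤ i)]
      have h3 : i + 1 + e + d + 1 = i + 2 + d + e := by omega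
      rw [h3]
      exact hxs
  -- every S-neighbour of v is adjacent to x 1
  have hstep : ∀ t, t ∉ C → G.Adj v t → G.Adj t s → G.Adj t (x 1) := by
    intro t htC hvt hts
    by_contra h1
    have htv : G.Adj t (x 0) := hx0 ▸ hvt.symm
    by_cases hex : ∃ i, 1 ≤ i ∧ i ≤ k ∧ G.Adj t (x i)
    · obtain ⟨hi1, hik, hti⟩ := Nat.find_spec hex
      set i₀ := Nat.find hex with hi₀
      have hmin0 : ∀ j < i₀, ¬ (1 ≤ j ∧ j ≤ k ∧ G.Adj t (x j)) := fun j hj => Nat.find_min hex hj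
      have hi2 : 2 ≤ i₀ := by
        by_contra h
        have h2 : i₀ = 1 := by omega
        rw [h2] at hti
        exact h1 hti
      refine no_cycle_through hch i₀ hi2 t x ?_ ?_ ?_ ?_
      · intro i hi j hj heq
        rcases lt_trichotomy i j with h | h | h
        · exact absurd heq (hne i j h (by omega))
        · exact h
        · exact absurd heq.symm (hne j i h (by omega))
      · intro i hi heq
        exact htC (heq ▸ hxC i)
      · intro i hi j hj
        constructor
        · intro hadj
          by_contra hcon
          push_neg at hcon
          rcases lt_trichotomy i j with h | h | h
          · exact hchord i j (by omega) (by omega) hadj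
          · exact G.irrefl (h ▸ hadj)
          · exact hchord j i (by omega) (by omega) hadj.symm
        · rintro (rfl | rfl)
          · exact hxadj i (by omega)
          · exact (hxadj j (by omega)).symm
      · intro i hi
        constructor
        · intro hadj
          by_contra hcon
          push_neg at hcon
          exact hmin0 i (by omega) ⟨by omega, by omega, hadj⟩
        · rintro (rfl | rfl)
          · exact htv
          · exact hti
    · push_neg at hex
      refine no_cycle_through hch (k + 1) (by omega) t
        (fun i => if i ≤ k then x i else s) ?_ ?_ ?_ ?_
      · intro i hi j hj heq
        by_cases h1' : i ≤ k <;> by_cases h2' : j ≤ k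
        · simp only [if_pos h1', if_pos h2'] at heq
          rcases lt_trichotomy i j with h | h | h
          · exact absurd heq (hne i j h h2')
          · exact h
          · exact absurd heq.symm (hne j i h h1')
        · simp only [if_pos h1', if_neg h2'] at heq
          exact absurd (heq ▸ hxC i) hsC
        · simp only [if_neg h1', if_pos h2'] at heq
          exact absurd (heq.symm ▸ hxC j) hsC
        · omega
      · intro i hi heq
        by_cases h' : i ≤ k
        · simp only [if_pos h'] at heq
          exact htC (heq ▸ hxC i)
        · simp only [if_neg h'] at heq
          exact (G.ne_of_adj hts) heq
      · intro i hi j hj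
        by_cases h1' : i ≤ k <;> by_cases h2' : j ≤ k
        · simp only [if_pos h1', if_pos h2']
          constructor
          · intro hadj
            by_contra hcon
            push_neg at hcon
            rcases lt_trichotomy i j with h | h | h
            · exact hchord i j (by omega) (by omega) hadj
            · exact G.irrefl (h ▸ hadj)
            · exact hchord j i (by omega) (by omega) hadj.symm
          · rintro (rfl | rfl)
            · exact hxadj i (by omega)
            · exact (hxadj j (by omega)).symm
        · simp only [if_pos h1', if_neg h2']
          constructor
          · intro hadj
            have hik : i = k := by
              by_contra h
              exact hno_s i (by omega) hadj
            omega
          · intro h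
            have hik : i = k := by omega
            rw [hik]
            exact hxs
        · simp only [if_neg h1', if_pos h2']
          constructor
          · intro hadj
            have hjk' : j = k := by
              by_contra h
              exact hno_s j (by omega) hadj.symm
            omega
          · intro h
            have hjk' : j = k := by omega
            rw [hjk']
            exact hxs.symm
        · simp only [if_neg h1', if_neg h2', SimpleGraph.irrefl]
          constructor
          · intro h
            exact h.elim
          · intro h
            omega
      · intro i hi
        by_cases h' : i ≤ k
        · simp only [if_pos h']
          constructor
          · intro hadj
            rcases Nat.eq_zero_or_pos i with rfl | hpos
            · left; rfl
            · exact absurd hadj (hex i hpos h')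
          · rintro (rfl | rfl)
            · exact htv
            · omega
        · simp only [if_neg h']
          constructor
          · intro _
            right
            omega
          · intro _
            exact hts
  have hts_all : ∀ t, t ∈ nbhdSet G C → G.Adj v t → G.Adj t s := by
    intro t ht hvt
    have htK : t ∈ K := by
      by_contra h
      exact ht.1 (hC.2.2.2 v hv t hvt h)
    exact hK htK hsK (fun heq => hvs (heq ▸ hvt))
  have hx1C : x 1 ∈ C := hxC 1
  by_cases hk : k = 1
  · refine ⟨x 1, hx1C, hk ▸ hxs, ?_⟩
    intro t ht hvt
    exact (hstep t ht.1 hvt (hts_all t ht hvt)).symm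
  · have hx1s : ¬ G.Adj (x 1) s := hno_s 1 (by omega)
    obtain ⟨w, hwC, hws, hw⟩ := IH (k - 1) (by omega) (x 1) hx1C hx1s
      ⟨fun i => x (i + 1), rfl, fun i => hxC (i + 1),
        fun i hi => hxadj (i + 1) (by omega), by
          show G.Adj (x (k - 1 + 1)) s
          have h3 : k - 1 + 1 = k := by omega
          rw [h3]
          exact hxs⟩
    refine ⟨w, hwC, hws, ?_⟩
    intro t ht hvt
    exact hw t ht (hstep t ht.1 hvt (hts_all t ht hvt)).symm

universe u

theorem stmt0 {V : Type u} (G : SimpleGraph V) (hconn : G.Connected)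
    (hchordal : IsChordal G) (K : Set V) (hK : G.IsClique K)
    (C : Set V) (hC : IsCompOutside G K C) (S : Set V) (hS : S = nbhdSet G C)
    (v : V) (hv : v ∈ C) (hprop : {s ∈ S | G.Adj v s} ⊂ S) :
    ∃ w ∈ C, {s ∈ S | G.Adj v s} ⊂ {s ∈ S | G.Adj w s} := by
  subst hS
  obtain ⟨sx, hsS, hsnot⟩ := Set.exists_of_ssubset hprop
  have hsC : sx ∉ C := hsS.1
  obtain ⟨u, huC, hus⟩ := hsS.2
  have hsK : sx ∈ K := by
    by_contra h
    exact hsC (hC.2.2.2 u huC sx hus h)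
  have hvs : ¬ G.Adj v sx := fun h => hsnot ⟨hsS, h⟩
  obtain ⟨p⟩ := hC.2.2.1.preconnected ⟨v, hv⟩ ⟨u, huC⟩
  have hgood : ∃ x : ℕ → V, x 0 = v ∧ (∀ i, x i ∈ C) ∧
      (∀ i < p.length, G.Adj (x i) (x (i+1))) ∧ G.Adj (x p.length) sx := by
    refine ⟨fun i => (p.getVert i : V), ?_, fun i => (p.getVert i).2, ?_, ?_⟩
    · show (p.getVert 0 : V) = v
      rw [p.getVert_zero]
    · intro i hi
      exact p.adj_getVert_succ hi
    · show G.Adj (p.getVert p.length : V) sx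
      rw [p.getVert_length]
      exact hus
  obtain ⟨w, hwC, hws, hw⟩ := main_aux hchordal hK hC hsC hsK p.length v hv hvs hgood
  refine ⟨w, hwC, ?_⟩
  rw [Set.ssubset_def]
  constructor
  · rintro t ⟨htS, hvt⟩
    exact ⟨htS, hw t htS hvt⟩
  · intro hcon
    exact hsnot (hcon ⟨hsS, hws⟩)
end

section
/- Let G be a connected chordal graph containing no strict comb of cliques, let K be a clique in G, and let C be a connected component of G − K with S = N(C). Then C contains a vertex v adjacent to every vertex of S. -/
open SimpleGraph

variable {V W : Type*}

universe u

private lemma chordal_no_cycle_aux {V : Type*} {G : SimpleGraph V} (h : IsChordal G) (n : ℕ) (hn : 4 ≤ n)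
    (w : ℕ → V)
    (hinj : ∀ i < n, ∀ j < n, w i = w j → i = j)
    (hadj : ∀ i < n, ∀ j < n, (G.Adj (w i) (w j) ↔
      (j = i+1 ∨ i = j+1 ∨ (i = 0 ∧ j+1 = n) ∨ (j = 0 ∧ i+1 = n)))) : False := by
  have hpos : NeZero n := ⟨by omega⟩
  have hfact : Fact (1 < n) := ⟨by omega⟩
  have key : ∀ a b : ZMod n, (b = a + 1) ↔ (b.val = a.val + 1 ∨ (a.val + 1 = n ∧ b.val = 0)) := by
    intro a b
    have h1 : (a+1).val = (a.val + 1) % n := by rw [ZMod.val_add, ZMod.val_one]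
    have ha := ZMod.val_lt a
    have hb := ZMod.val_lt b
    have h3 : (a.val + 1) % n = if a.val + 1 = n then 0 else a.val + 1 := by
      split
      · next he => rw [he, Nat.mod_self]
      · next he => exact Nat.mod_eq_of_lt (by omega)
    constructor
    · rintro h4
      have := congrArg ZMod.val h4
      rw [h1] at this
      split at h3 <;> omega
    · intro h2
      apply ZMod.val_injective
      rw [h1]
      split at h3 <;> omega
  apply h n hn (fun z => w z.val)
  · intro a b hab
    exact ZMod.val_injective n (hinj _ (ZMod.val_lt a) _ (ZMod.val_lt b) hab)
  · intro i j
    have hi := ZMod.val_lt i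
    have hj := ZMod.val_lt j
    rw [hadj _ hi _ hj, key i j, key j i]
    tauto

private lemma chordal_extend_aux {V : Type*} {G : SimpleGraph V} (hchordal : IsChordal G)
    {K C : Set V} (hK : G.IsClique K) (hC : IsCompOutside G K C)
    {v s : V} (hv : v ∈ C) (hs : s ∈ nbhdSet G C) :
    ∃ v' ∈ C, G.Adj v' s ∧ ∀ t ∈ nbhdSet G C, G.Adj v t → G.Adj v' t := by
  classical
  have hSK : nbhdSet G C ⊆ K := by
    rintro x ⟨hxC, u, huC, hux⟩
    by_contra hxK
    exact hxC (hC.2.2.2 u huC x hux hxK)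
  by_cases hvs : G.Adj v s
  · exact ⟨v, hv, hvs, fun t _ h => h⟩
  -- the set of lengths of C-walks from v to a neighbour of s
  set T : Set ℕ := {n : ℕ | ∃ u : ℕ → V, u 0 = v ∧ (∀ j ≤ n, u j ∈ C) ∧
    (∀ j < n, G.Adj (u j) (u (j+1))) ∧ G.Adj (u n) s} with hT
  have hTne : T.Nonempty := by
    obtain ⟨hsC, u0, hu0C, hu0s⟩ := hs
    obtain ⟨p⟩ := hC.2.2.1.preconnected ⟨v, hv⟩ ⟨u0, hu0C⟩
    refine ⟨p.length, fun j => (p.getVert j).1, ?_, fun j _ => (p.getVert j).2, ?_, ?_⟩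
    · exact congrArg Subtype.val p.getVert_zero
    · intro j hj
      exact p.adj_getVert_succ hj
    · show G.Adj (p.getVert p.length).1 s
      have : p.getVert p.length = ⟨u0, hu0C⟩ := p.getVert_length
      rw [this]
      exact hu0s
  set k := sInf T with hkdef
  obtain ⟨u, hu0, huC, huadj, huks⟩ : k ∈ T := Nat.sInf_mem hTne
  have hkmin : ∀ n ∈ T, k ≤ n := fun n hn => Nat.sInf_le hn
  have hk0 : k ≠ 0 := by
    intro h
    have := huks
    rw [h, hu0] at this
    exact hvs this
  -- shortcut lemma
  have hshort : ∀ a b, a < b → b ≤ k → ¬ (u a = u b ∨ (a + 1 < b ∧ G.Adj (u a) (u b))) := by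
    rintro a b hab hbk (heq | ⟨hab1, hadj'⟩)
    · set d := b - a with hd
      have h1 : k - d < k := by omega
      have hmem : k - d ∈ T := by
        refine ⟨fun j => u (if j < a then j else j + d), ?_, ?_, ?_, ?_⟩
        · show u (if 0 < a then 0 else 0 + d) = v
          by_cases h0 : 0 < a
          · rw [if_pos h0, hu0]
          · rw [if_neg h0, show 0 + d = b by omega, ← heq, show a = 0 by omega, hu0]
        · intro j hj
          exact huC _ (by split <;> omega)
        · intro j hj
          show G.Adj (u (if j < a then j else j + d)) (u (if j + 1 < a then j + 1 else j + 1 + d))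
          by_cases h2 : j + 1 < a
          · rw [if_pos (by omega), if_pos h2]
            exact huadj j (by omega)
          · by_cases h3 : j < a
            · rw [if_pos h3, if_neg h2,
                show j + 1 + d = b by omega, ← heq, show a = j + 1 by omega]
              exact huadj j (by omega)
            · rw [if_neg h3, if_neg h2, show j + 1 + d = j + d + 1 by omega]
              exact huadj (j + d) (by omega)
        · show G.Adj (u (if k - d < a then k - d else k - d + d)) s
          rw [if_neg (by omega), show k - d + d = k by omega]
          exact huks
      have := hkmin _ hmem
      omega
    · set d := b - a - 1 with hd
      have h1 : k - d < k := by omega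
      have hmem : k - d ∈ T := by
        refine ⟨fun j => u (if j ≤ a then j else j + d), ?_, ?_, ?_, ?_⟩
        · show u (if 0 ≤ a then 0 else 0 + d) = v
          rw [if_pos (Nat.zero_le a), hu0]
        · intro j hj
          exact huC _ (by split <;> omega)
        · intro j hj
          show G.Adj (u (if j ≤ a then j else j + d)) (u (if j + 1 ≤ a then j + 1 else j + 1 + d))
          by_cases h2 : j + 1 ≤ a
          · rw [if_pos (by omega), if_pos h2]
            exact huadj j (by omega)
          · by_cases h3 : j ≤ a
            · rw [if_pos h3, if_neg h2, show j + 1 + d = b by omega, show j = a by omega]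
              exact hadj'
            · rw [if_neg h3, if_neg h2, show j + 1 + d = j + d + 1 by omega]
              exact huadj (j + d) (by omega)
        · show G.Adj (u (if k - d ≤ a then k - d else k - d + d)) s
          rw [if_neg (by omega), show k - d + d = k by omega]
          exact huks
      have := hkmin _ hmem
      omega
  have hnos : ∀ j < k, ¬ G.Adj (u j) s := by
    intro j hj hadj'
    have : j ∈ T := ⟨u, hu0, fun j' hj' => huC j' (by omega), fun j' hj' => huadj j' (by omega), hadj'⟩
    have := hkmin _ this
    omega
  have hinj : ∀ a ≤ k, ∀ b ≤ k, u a = u b → a = b := by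
    intro a ha b hb he
    rcases lt_trichotomy a b with h | h | h
    · exact absurd (Or.inl he) (hshort a b h hb)
    · exact h
    · exact absurd (Or.inl he.symm) (hshort b a h ha)
  have F3 : ∀ m ≤ k, ∀ m' ≤ k, (G.Adj (u m) (u m') ↔ (m' = m + 1 ∨ m = m' + 1)) := by
    intro m hm m' hm'
    constructor
    · intro hadj'
      by_contra hcon
      push_neg at hcon
      rcases lt_trichotomy m m' with h | h | h
      · exact hshort m m' h hm' (Or.inr ⟨by omega, hadj'⟩)
      · exact G.loopless.irrefl _ (h ▸ hadj')
      · exact hshort m' m h hm (Or.inr ⟨by omega, hadj'.symm⟩)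
    · rintro (rfl | h)
      · exact huadj m (by omega)
      · subst h
        exact (huadj m' (by omega)).symm
  have F2 : ∀ m ≤ k, (G.Adj (u m) s ↔ m = k) := by
    intro m hm
    constructor
    · intro h; by_contra h'; exact hnos m (by omega) h
    · rintro rfl; exact huks
  -- the main conclusion
  refine ⟨u k, huC k le_rfl, huks, ?_⟩
  rintro t ⟨htC, ht⟩ hvt
  by_contra hkt
  have hsC : s ∉ C := hs.1
  have hst : s ≠ t := by rintro rfl; exact hvs hvt
  have hAst : G.Adj s t := hK (hSK hs) (hSK ⟨htC, ht⟩) hst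
  set a := Nat.findGreatest (fun j => G.Adj t (u j)) k with hadef
  have h00 : G.Adj t (u 0) := by rw [hu0]; exact hvt.symm
  have ha : G.Adj t (u a) := Nat.findGreatest_spec (P := fun j => G.Adj t (u j)) (Nat.zero_le k) h00
  have hamax : ∀ m, a < m → m ≤ k → ¬ G.Adj t (u m) := fun m h1 h2 =>
    Nat.findGreatest_is_greatest (P := fun j => G.Adj t (u j)) h1 h2
  have halek : a ≤ k := Nat.findGreatest_le (P := fun j => G.Adj t (u j)) k
  have hak : a < k := by
    rcases Nat.lt_or_ge a k with h | h
    · exact h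
    · exfalso; exact hkt ((show a = k by omega) ▸ ha).symm
  have F1 : ∀ m, a ≤ m → m ≤ k → (G.Adj t (u m) ↔ m = a) := by
    intro m h1 h2
    constructor
    · intro h; by_contra h'; exact hamax m (by omega) h2 h
    · rintro rfl; exact ha
  set n := k - a + 3 with hn
  set c : ℕ → V := fun j => if j = 0 then t else if j ≤ k - a + 1 then u (a + j - 1) else s
    with hc
  have hc0 : c 0 = t := by
    show (if 0 = 0 then t else if 0 ≤ k - a + 1 then u (a + 0 - 1) else s) = t
    rw [if_pos rfl]
  have hcmid : ∀ j, 1 ≤ j → j ≤ k - a + 1 → c j = u (a + j - 1) := by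
    intro j h1 h2
    show (if j = 0 then t else if j ≤ k - a + 1 then u (a + j - 1) else s) = u (a + j - 1)
    rw [if_neg (by omega), if_pos h2]
  have hclast : c (k - a + 2) = s := by
    show (if k - a + 2 = 0 then t else if k - a + 2 ≤ k - a + 1 then u (a + (k - a + 2) - 1) else s) = s
    rw [if_neg (by omega), if_neg (by omega)]
  have huCm : ∀ m ≤ k, u m ∈ C := fun m hm => huC m hm
  apply chordal_no_cycle_aux hchordal n (by omega) c
  · -- injectivity
    intro i hi j hj he
    have hzi : i = 0 ∨ (1 ≤ i ∧ i ≤ k - a + 1) ∨ i = k - a + 2 := by omega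
    have hzj : j = 0 ∨ (1 ≤ j ∧ j ≤ k - a + 1) ∨ j = k - a + 2 := by omega
    rcases hzi with rfl | ⟨hi1, hi2⟩ | rfl <;> rcases hzj with rfl | ⟨hj1, hj2⟩ | rfl
    · rfl
    · rw [hc0, hcmid j hj1 hj2] at he
      exact absurd (he ▸ huCm (a + j - 1) (by omega)) htC
    · rw [hc0, hclast] at he; exact absurd he.symm hst
    · rw [hc0, hcmid i hi1 hi2] at he
      exact absurd (he.symm ▸ huCm (a + i - 1) (by omega)) htC
    · rw [hcmid i hi1 hi2, hcmid j hj1 hj2] at he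
      have := hinj _ (by omega) _ (by omega) he
      omega
    · rw [hcmid i hi1 hi2, hclast] at he
      exact absurd (he.symm ▸ huCm (a + i - 1) (by omega)) hsC
    · rw [hc0, hclast] at he; exact absurd he hst
    · rw [hcmid j hj1 hj2, hclast] at he
      exact absurd (he ▸ huCm (a + j - 1) (by omega)) hsC
    · rfl
  · -- adjacency
    intro i hi j hj
    have hzi : i = 0 ∨ (1 ≤ i ∧ i ≤ k - a + 1) ∨ i = k - a + 2 := by omega
    have hzj : j = 0 ∨ (1 ≤ j ∧ j ≤ k - a + 1) ∨ j = k - a + 2 := by omega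
    rcases hzi with rfl | ⟨hi1, hi2⟩ | rfl <;> rcases hzj with rfl | ⟨hj1, hj2⟩ | rfl
    · rw [hc0]; exact iff_of_false (G.loopless.irrefl t) (by omega)
    · rw [hc0, hcmid j hj1 hj2, F1 (a + j - 1) (by omega) (by omega)]; omega
    · rw [hc0, hclast]; exact iff_of_true hAst.symm (by omega)
    · rw [hc0, hcmid i hi1 hi2, adj_comm, F1 (a + i - 1) (by omega) (by omega)]; omega
    · rw [hcmid i hi1 hi2, hcmid j hj1 hj2, F3 _ (by omega) _ (by omega)]; omega
    · rw [hcmid i hi1 hi2, hclast, F2 _ (by omega)]; omega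
    · rw [hc0, hclast]; exact iff_of_true hAst (by omega)
    · rw [hcmid j hj1 hj2, hclast, adj_comm, F2 _ (by omega)]; omega
    · rw [hclast]; exact iff_of_false (G.loopless.irrefl s) (by omega)


theorem stmt1 {V : Type u} (G : SimpleGraph V) (hconn : G.Connected)
    (hchordal : IsChordal G) (hcomb : ¬ HasStrictCombOfCliques G)
    (K : Set V) (hK : G.IsClique K)
    (C : Set V) (hC : IsCompOutside G K C) (S : Set V) (hS : S = nbhdSet G C) :
    ∃ v ∈ C, ∀ s ∈ S, G.Adj v s := by
  classical
  subst hS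
  by_contra hno
  push_neg at hno
  have hSK : nbhdSet G C ⊆ K := by
    rintro x ⟨hxC, u, huC, hux⟩
    by_contra hxK
    exact hxC (hC.2.2.2 u huC x hux hxK)
  obtain ⟨v0, hv0⟩ := hC.1
  have hsel : ∀ v : {x // x ∈ C}, ∃ s : V, s ∈ nbhdSet G C ∧ ¬ G.Adj v.1 s := by
    intro v
    obtain ⟨s, hs1, hs2⟩ := hno v.1 v.2
    exact ⟨s, hs1, hs2⟩
  choose sel hsel1 hsel2 using hsel
  have hstep : ∀ (v : {x // x ∈ C}) (s : V), s ∈ nbhdSet G C →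
      ∃ v' : {x // x ∈ C}, G.Adj v'.1 s ∧ ∀ t ∈ nbhdSet G C, G.Adj v.1 t → G.Adj v'.1 t := by
    intro v s hs
    obtain ⟨v', hv'C, h1, h2⟩ := chordal_extend_aux hchordal hK hC v.2 hs
    exact ⟨⟨v', hv'C⟩, h1, h2⟩
  choose next hnext1 hnext2 using hstep
  let f : ℕ → {x // x ∈ C} :=
    fun n => Nat.rec ⟨v0, hv0⟩ (fun _ p => next p (sel p) (hsel1 p)) n
  have hf : ∀ n, f (n + 1) = next (f n) (sel (f n)) (hsel1 (f n)) := fun n => rfl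
  have M : ∀ i j, i ≤ j → ∀ t ∈ nbhdSet G C, G.Adj (f i).1 t → G.Adj (f j).1 t := by
    intro i j hij
    induction j, hij using Nat.le_induction with
    | base => exact fun t _ h => h
    | succ m hm ih =>
      intro t ht h
      rw [hf m]
      exact hnext2 (f m) (sel (f m)) (hsel1 (f m)) t ht (ih t ht h)
  have adjlt : ∀ j i, j < i → G.Adj (f i).1 (sel (f j)) := by
    intro j i hji
    refine M (j + 1) i (by omega) _ (hsel1 (f j)) ?_
    rw [hf j]
    exact hnext1 (f j) (sel (f j)) (hsel1 (f j))
  have nadjge : ∀ j i, i ≤ j → ¬ G.Adj (f i).1 (sel (f j)) := by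
    intro j i hij hadj
    exact hsel2 (f j) (M i j hij _ (hsel1 (f j)) hadj)
  have sinj : ∀ i j, i ≠ j → sel (f i) ≠ sel (f j) := by
    intro i j hij he
    rcases Nat.lt_or_ge i j with h | h
    · exact nadjge j j le_rfl (he ▸ adjlt i j h)
    · have h' : j < i := by omega
      exact nadjge i i le_rfl (he ▸ adjlt j i h').symm.symm
  apply hcomb
  refine ⟨fun i => sel (f i), ?_, ?_, ?_⟩
  · intro i j he
    by_contra hij
    exact sinj i j hij he
  · intro i j hij
    exact hK (hSK (hsel1 (f i))) (hSK (hsel1 (f j))) (sinj i j hij)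
  · intro i hi
    exact ⟨(f i).1, fun j hj => adjlt j i hj, fun j hj => nadjge j i hj⟩
end

section
/- In a chordal graph G, if there exist a clique K, a component C of G − K with S = N(C), and an infinite strictly increasing chain of sets N_S(w_1) ⊊ N_S(w_2) ⊊ ⋯ with all w_i ∈ C, then G contains a strict comb of cliques. -/
open SimpleGraph

variable {V W : Type*}

universe u

theorem stmt2 {V : Type u} (G : SimpleGraph V) (hchordal : IsChordal G)
    (K : Set V) (hK : G.IsClique K)
    (C : Set V) (hC : IsCompOutside G K C) (S : Set V) (hS : S = nbhdSet G C)
    (w : ℕ → V) (hw : ∀ i, w i ∈ C)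
    (hchain : ∀ i, {s ∈ S | G.Adj (w i) s} ⊂ {s ∈ S | G.Adj (w (i + 1)) s}) :
    HasStrictCombOfCliques G := by

  have hSK : S ⊆ K := by
    rintro v hv
    rw [hS] at hv
    obtain ⟨hvC, u, huC, hadj⟩ := hv
    by_contra hvK
    exact hvC (hC.2.2.2 u huC v hadj hvK)
  have hSclique : G.IsClique S := hK.subset hSK
  set A : ℕ → Set V := fun i => {s ∈ S | G.Adj (w i) s} with hA
  have hmono : Monotone A := monotone_nat_of_le_succ fun i => (hchain i).subset
  have hne : ∀ i, ∃ x ∈ A (i + 1), x ∉ A i := fun i => Set.exists_of_ssubset (hchain i)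
  choose s hs1 hs2 using hne
  have hsS : ∀ i, s i ∈ S := fun i => (hs1 i).1
  have hsAdj : ∀ i j, j < i → G.Adj (w i) (s j) := by
    intro i j hji
    exact (hmono (Nat.succ_le_of_lt hji) (hs1 j)).2
  have hsNAdj : ∀ i j, i ≤ j → ¬ G.Adj (w i) (s j) := by
    intro i j hij hadj
    exact hs2 j (hmono hij ⟨hsS j, hadj⟩)
  have hinj : Function.Injective s := by
    intro i j hij
    by_contra hne'
    rcases Nat.lt_or_ge i j with h | h
    · exact hs2 j (hij ▸ hmono h (hs1 i))
    · have h' : j < i := lt_of_le_of_ne h (Ne.symm hne')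
      exact hs2 i (hij ▸ hmono h' (hs1 j))
  refine ⟨s, hinj, ?_, ?_⟩
  · intro i j hij
    exact hSclique (hsS i) (hsS j) (fun h => hij (hinj h))
  · intro i hi
    exact ⟨w i, fun j hj => hsAdj i j hj, fun j hj => hsNAdj i j hj⟩
end

section
/- Every chordal graph with no infinite clique admits a tree-decomposition all of whose parts are maximal cliques. -/
open SimpleGraph

variable {V W : Type*}

universe u


section AuxChordal
namespace AuxC

variable {V : Type u} {G : SimpleGraph V}

lemma exists_take {u v : V} (p : G.Walk u v) (i : ℕ) (hi : i ≤ p.length) :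
    ∃ q : G.Walk u (p.getVert i), q.length = i ∧ ∀ z ∈ q.support, z ∈ p.support := by
  induction p generalizing i with
  | nil =>
    simp only [Walk.length_nil, Nat.le_zero] at hi
    subst hi
    exact ⟨Walk.nil, rfl, fun z hz => hz⟩
  | cons h q ih =>
    rcases i with _ | i
    · refine ⟨(Walk.nil.copy rfl (q.cons h).getVert_zero.symm), by simp, ?_⟩
      intro z hz
      simp only [Walk.support_copy, Walk.support_nil, List.mem_singleton] at hz
      subst hz; simp
    · obtain ⟨q', hq', hsub⟩ := ih i (by simpa [Nat.succ_le_succ_iff] using hi)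
      refine ⟨(q'.cons h).copy rfl (Walk.getVert_cons_succ _ _).symm, by simp [hq'], ?_⟩
      intro z hz
      simp only [Walk.support_copy, Walk.support_cons, List.mem_cons] at hz
      rcases hz with rfl | hz
      · simp
      · simp only [Walk.support_cons, List.mem_cons]
        exact Or.inr (hsub z hz)

lemma exists_drop {u v : V} (p : G.Walk u v) (i : ℕ) (hi : i ≤ p.length) :
    ∃ q : G.Walk (p.getVert i) v, q.length = p.length - i ∧ ∀ z ∈ q.support, z ∈ p.support := by
  induction p generalizing i with
  | nil =>
    simp only [Walk.length_nil, Nat.le_zero] at hi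
    subst hi
    exact ⟨Walk.nil, rfl, fun z hz => hz⟩
  | cons h q ih =>
    rcases i with _ | i
    · exact ⟨((q.cons h).copy (q.cons h).getVert_zero.symm rfl), by simp, by simp⟩
    · obtain ⟨q', hq', hsub⟩ := ih i (by simpa [Nat.succ_le_succ_iff] using hi)
      refine ⟨q'.copy (Walk.getVert_cons_succ _ _).symm rfl, by simp [hq'], ?_⟩
      intro z hz
      simp only [Walk.support_copy] at hz
      simp only [Walk.support_cons, List.mem_cons]
      exact Or.inr (hsub z hz)

lemma getVert_mem_support {u v : V} (p : G.Walk u v) {i : ℕ} (hi : i ≤ p.length) :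
    p.getVert i ∈ p.support :=
  Walk.mem_support_iff_exists_getVert.2 ⟨i, rfl, hi⟩

lemma IsPath.getVert_inj {u v : V} {p : G.Walk u v} (hp : p.IsPath) {i j : ℕ}
    (hi : i ≤ p.length) (hj : j ≤ p.length) (h : p.getVert i = p.getVert j) : i = j := by
  induction p generalizing i j with
  | nil =>
    simp only [Walk.length_nil, Nat.le_zero] at hi hj
    omega
  | cons hadj q ih =>
    rw [Walk.cons_isPath_iff] at hp
    obtain ⟨hq, hu⟩ := hp
    simp only [Walk.length_cons] at hi hj
    rcases i with _ | i <;> rcases j with _ | j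
    · rfl
    · exfalso
      rw [Walk.getVert_zero, Walk.getVert_cons_succ] at h
      exact hu (h ▸ getVert_mem_support q (by omega))
    · exfalso
      rw [Walk.getVert_zero, Walk.getVert_cons_succ] at h
      exact hu (h ▸ getVert_mem_support q (by omega))
    · rw [Walk.getVert_cons_succ, Walk.getVert_cons_succ] at h
      have := ih hq (by omega) (by omega) h
      omega


lemma chordal_no_cycle (hch : IsChordal G) (n : ℕ) (hn : 4 ≤ n) (g : ℕ → V)
    (hinj : ∀ i < n, ∀ j < n, g i = g j → i = j)
    (hadj : ∀ i, i + 1 < n → G.Adj (g i) (g (i + 1)))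
    (hwrap : G.Adj (g (n - 1)) (g 0))
    (hnonadj : ∀ i j, i < j → j < n → j ≠ i + 1 → ¬(i = 0 ∧ j = n - 1) →
      ¬ G.Adj (g i) (g j)) : False := by
  haveI : NeZero n := ⟨by omega⟩
  haveI : Fact (1 < n) := ⟨by omega⟩
  apply hch n hn (fun z => g z.val)
  · intro z w h
    exact ZMod.val_injective n (hinj _ z.val_lt _ w.val_lt h)
  · intro i j
    have hi := i.val_lt
    have hj := j.val_lt
    have hval : ∀ z : ZMod n, (z + 1).val = (z.val + 1) % n := by
      intro z
      rw [ZMod.val_add, ZMod.val_one]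
    have hiff : ∀ z w : ZMod n, z = w ↔ z.val = w.val :=
      fun z w => ⟨fun h => h ▸ rfl, fun h => ZMod.val_injective n h⟩
    rw [hiff j (i+1), hiff i (j+1), hval, hval]
    set a := i.val with ha
    set b := j.val with hb
    have e1 : (a + 1) % n = if a + 1 = n then 0 else a + 1 := by
      split_ifs with h
      · simp [h]
      · exact Nat.mod_eq_of_lt (by omega)
    have e2 : (b + 1) % n = if b + 1 = n then 0 else b + 1 := by
      split_ifs with h
      · simp [h]
      · exact Nat.mod_eq_of_lt (by omega)
    rw [e1, e2]
    constructor
    · intro hAdj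
      have hab : a ≠ b := by
        intro h
        rw [h] at hAdj
        exact G.irrefl hAdj
      rcases Nat.lt_or_ge a b with hlt | hge
      · rcases eq_or_ne b (a + 1) with he | hne
        · left; split_ifs with h <;> omega
        · by_cases h0 : a = 0 ∧ b = n - 1
          · right; split_ifs with h <;> omega
          · exact absurd hAdj (hnonadj a b hlt hj hne h0)
      · have hlt : b < a := by omega
        rcases eq_or_ne a (b + 1) with he | hne
        · right; split_ifs with h <;> omega
        · by_cases h0 : b = 0 ∧ a = n - 1
          · left; split_ifs with h <;> omega
          · exact absurd hAdj.symm (hnonadj b a hlt hi hne h0)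
    · intro h
      rcases h with h | h
      · split_ifs at h with h1
        · have ha' : a = n - 1 := by omega
          have hb' : b = 0 := by omega
          rw [ha', hb']; exact hwrap
        · rw [h]; exact hadj a (by omega)
      · split_ifs at h with h1
        · have hb' : b = n - 1 := by omega
          have ha' : a = 0 := by omega
          rw [ha', hb']; exact hwrap.symm
        · rw [h]; exact (hadj b (by omega)).symm


lemma complete_vertex (hch : IsChordal G) (C : Set V)
    (hconn : ∀ x ∈ C, ∀ y ∈ C, ∃ p : G.Walk x y, ∀ z ∈ p.support, z ∈ C)
    (hCne : C.Nonempty) (S : Set V) (hSfin : S.Finite) :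
    G.IsClique S → (∀ a ∈ S, a ∉ C) → (∀ a ∈ S, ∃ x ∈ C, G.Adj a x) →
    ∃ u ∈ C, ∀ a ∈ S, G.Adj u a := by
  classical
  refine Set.Finite.induction_on
    (motive := fun S _ => G.IsClique S → (∀ a ∈ S, a ∉ C) → (∀ a ∈ S, ∃ x ∈ C, G.Adj a x) →
      ∃ u ∈ C, ∀ a ∈ S, G.Adj u a) S hSfin
    (fun _ _ _ => ⟨hCne.choose, hCne.choose_spec, fun a ha => absurd ha (Set.notMem_empty a)⟩)
    ?_
  intro a S' haS' hS'fin ih hclique hdisj hnb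
  obtain ⟨u, huC, hu⟩ := ih (hclique.subset (Set.subset_insert a S'))
    (fun b hb => hdisj b (Set.mem_insert_of_mem a hb))
    (fun b hb => hnb b (Set.mem_insert_of_mem a hb))
  have haC : a ∉ C := hdisj a (Set.mem_insert a S')
  -- minimal-length path from u to a neighbour of a, within C
  have hQ : ∃ n : ℕ, ∃ x, x ∈ C ∧ G.Adj a x ∧ ∃ p : G.Walk u x,
      p.length = n ∧ p.IsPath ∧ ∀ z ∈ p.support, z ∈ C := by
    obtain ⟨x, hxC, hax⟩ := hnb a (Set.mem_insert a S')
    obtain ⟨w, hw⟩ := hconn u huC x hxC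
    exact ⟨w.bypass.length, x, hxC, hax, w.bypass, rfl, w.bypass_isPath,
      fun z hz => hw z (w.support_bypass_subset hz)⟩
  have hmin : ∀ n' < Nat.find hQ, ¬ ∃ x, x ∈ C ∧ G.Adj a x ∧ ∃ p : G.Walk u x,
      p.length = n' ∧ p.IsPath ∧ ∀ z ∈ p.support, z ∈ C := fun n' hn' => Nat.find_min hQ hn'
  obtain ⟨x, hxC, hax, p, hlen, hpath, hsupp⟩ := Nat.find_spec hQ
  set k := Nat.find hQ with hk
  clear_value k
  clear hk hQ
  have f1 : ∀ i < k, ¬ G.Adj a (p.getVert i) := by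
    intro i hik hAdj
    obtain ⟨q, hqlen, hqsupp⟩ := exists_take p i (by omega)
    have hblt : q.bypass.length < k := by
      have h1 := q.length_bypass_le
      omega
    refine hmin q.bypass.length hblt ⟨p.getVert i, hsupp _ (getVert_mem_support p (by omega)), hAdj,
      q.bypass, rfl, q.bypass_isPath, fun z hz => hsupp z (hqsupp z (q.support_bypass_subset hz))⟩
  have f2 : ∀ i j, i + 1 < j → j ≤ k → ¬ G.Adj (p.getVert i) (p.getVert j) := by
    intro i j hij hjk hAdj
    obtain ⟨q1, hq1len, hq1supp⟩ := exists_take p i (by omega)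
    obtain ⟨q2, hq2len, hq2supp⟩ := exists_drop p j (by omega)
    set w := q1.append (q2.cons hAdj) with hw
    have hwlen : w.length = i + 1 + (k - j) := by
      simp [hw, Walk.length_append, hq1len, hq2len]
      omega
    have hblt : w.bypass.length < k := by
      have h1 := w.length_bypass_le
      omega
    refine hmin w.bypass.length hblt ⟨x, hxC, hax, w.bypass, rfl, w.bypass_isPath, fun z hz => ?_⟩
    have hz' := w.support_bypass_subset hz
    rw [Walk.mem_support_append_iff] at hz'
    rcases hz' with hz' | hz'
    · exact hsupp z (hq1supp z hz')
    · rw [Walk.support_cons, List.mem_cons] at hz'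
      rcases hz' with rfl | hz'
      · exact hsupp _ (getVert_mem_support p (by omega))
      · exact hsupp z (hq2supp z hz')
  rcases Nat.eq_zero_or_pos k with hk0 | hkpos
  · have : u = x := p.eq_of_length_eq_zero (by omega)
    subst this
    refine ⟨u, huC, fun b hb => ?_⟩
    rcases Set.mem_insert_iff.1 hb with rfl | hb
    · exact hax.symm
    · exact hu b hb
  · -- k ≥ 1 : show the endpoint x is adjacent to everything
    have key : ∀ b ∈ S', G.Adj b (p.getVert k) := by
      intro b hb
      by_contra hbk
      have hbC : b ∉ C := hdisj b (Set.mem_insert_of_mem a hb)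
      have hba : a ≠ b := fun h => haS' (h ▸ hb)
      have hab : G.Adj a b := hclique (Set.mem_insert a S') (Set.mem_insert_of_mem a hb) hba
      set Pb := fun i => G.Adj b (p.getVert i) with hPb
      have hP0 : Pb 0 := by
        rw [hPb]
        simp only []
        rw [Walk.getVert_zero]
        exact (hu b hb).symm
      set m := Nat.findGreatest Pb k with hm'
      have hm : Pb m := Nat.findGreatest_spec (Nat.zero_le k) hP0
      have hmk : m ≤ k := Nat.findGreatest_le k
      have hgt : ∀ i, m < i → i ≤ k → ¬ Pb i := fun i h1 h2 =>
        Nat.findGreatest_is_greatest h1 h2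
      have hmltk : m < k := by
        rcases Nat.lt_or_ge m k with h | h
        · exact h
        · exfalso; exact hbk (by have : m = k := by omega
                                 exact this ▸ hm)
      set n := k - m + 3 with hn'
      set g : ℕ → V := fun t => if t = 0 then b else
        if t ≤ k - m + 1 then p.getVert (m + t - 1) else a with hg
      have hg0 : g 0 = b := by simp [hg]
      have hgmid : ∀ t, 1 ≤ t → t ≤ k - m + 1 → g t = p.getVert (m + t - 1) := by
        intro t h1 h2
        simp only [hg]
        rw [if_neg (by omega), if_pos h2]
      have hglast : g (k - m + 2) = a := by
        simp only [hg]
        rw [if_neg (by omega), if_neg (by omega)]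
      have hxk : p.getVert k = x := by rw [← hlen]; exact p.getVert_length
      refine chordal_no_cycle hch n (by omega) g ?_ ?_ ?_ ?_
      · -- injectivity
        have main : ∀ i < n, ∀ j < n, i < j → g i ≠ g j := by
          intro i hi j hj hij heq
          rcases Nat.eq_zero_or_pos i with rfl | hipos
          · rw [hg0] at heq
            rcases Nat.lt_or_ge j (k - m + 2) with hj2 | hj2
            · rw [hgmid j (by omega) (by omega)] at heq
              exact hbC (heq ▸ hsupp _ (getVert_mem_support p (by omega)))
            · have : j = k - m + 2 := by omega
              rw [this, hglast] at heq
              exact hba heq.symm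
          · rcases Nat.lt_or_ge j (k - m + 2) with hj2 | hj2
            · rw [hgmid i (by omega) (by omega), hgmid j (by omega) (by omega)] at heq
              have := IsPath.getVert_inj hpath (by omega) (by omega) heq
              omega
            · have hj3 : j = k - m + 2 := by omega
              rcases Nat.lt_or_ge i (k - m + 2) with hi2 | hi2
              · rw [hgmid i (by omega) (by omega), hj3, hglast] at heq
                exact haC (heq ▸ hsupp _ (getVert_mem_support p (by omega)))
              · omega
        intro i hi j hj heq
        rcases Nat.lt_trichotomy i j with h | h | h
        · exact absurd heq (main i hi j hj h)
        · exact h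
        · exact absurd heq.symm (main j hj i hi h)
      · -- consecutive adjacency
        intro i hi
        rcases Nat.eq_zero_or_pos i with rfl | hipos
        · rw [hg0, hgmid 1 (by omega) (by omega)]
          simpa using hm
        · rcases Nat.lt_or_ge (i + 1) (k - m + 2) with h2 | h2
          · rw [hgmid i (by omega) (by omega), hgmid (i+1) (by omega) (by omega)]
            have : m + (i + 1) - 1 = (m + i - 1) + 1 := by omega
            rw [this]
            exact p.adj_getVert_succ (by omega)
          · have : i + 1 = k - m + 2 := by omega
            rw [hgmid i (by omega) (by omega), this, hglast]
            have : m + i - 1 = k := by omega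
            rw [this, hxk]
            exact hax.symm
      · -- wrap
        have : n - 1 = k - m + 2 := by omega
        rw [this, hglast, hg0]
        exact hab
      · -- non-adjacency
        intro i j hij hjn hjne h0
        rcases Nat.eq_zero_or_pos i with rfl | hipos
        · rcases Nat.lt_or_ge j (k - m + 2) with hj2 | hj2
          · rw [hg0, hgmid j (by omega) (by omega)]
            exact hgt (m + j - 1) (by omega) (by omega)
          · exfalso; exact h0 ⟨rfl, by omega⟩
        · rcases Nat.lt_or_ge j (k - m + 2) with hj2 | hj2
          · rw [hgmid i (by omega) (by omega), hgmid j (by omega) (by omega)]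
            exact f2 (m + i - 1) (m + j - 1) (by omega) (by omega)
          · have hj3 : j = k - m + 2 := by omega
            rw [hgmid i (by omega) (by omega), hj3, hglast]
            exact fun h => f1 (m + i - 1) (by omega) h.symm
    have hxk : p.getVert k = x := by rw [← hlen]; exact p.getVert_length
    refine ⟨p.getVert k, hxk.symm ▸ hxC, fun b hb => ?_⟩
    rcases Set.mem_insert_iff.1 hb with rfl | hb
    · rw [hxk]; exact hax.symm
    · exact (key b hb).symm


lemma cycle_snd_ne_penultimate {β : Type*} {G : SimpleGraph β} {x : β} (d : G.Walk x x)
    (hd : d.IsCycle) : d.getVert 1 ≠ d.getVert (d.length - 1) := by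
  have hlen : 3 ≤ d.length := hd.three_le_length
  intro h
  cases d with
  | nil => simp at hlen
  | cons hxy q =>
    have hq : q.IsPath := ((Walk.cons_isCycle_iff q hxy).1 hd).1
    simp only [Walk.length_cons] at hlen h
    rw [Walk.getVert_cons_succ] at h
    rw [show q.length + 1 - 1 = q.length - 1 + 1 by omega, Walk.getVert_cons_succ] at h
    have := IsPath.getVert_inj hq (by omega) (by omega) h
    omega

variable {α : Type*} {s : Set α} {π : α → α} {r : α}

/-- The parent graph on a subtype. -/
def parentGraph (s : Set α) (π : α → α) : SimpleGraph ↥s where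
  Adj a b := (a : α) ≠ (b : α) ∧ (π a = b ∨ π b = a)
  symm := by
    constructor
    rintro a b ⟨hne, h | h⟩
    · exact ⟨fun h' => hne h'.symm, Or.inr h⟩
    · exact ⟨fun h' => hne h'.symm, Or.inl h⟩
  loopless := by constructor; rintro a ⟨hne, _⟩; exact hne rfl

section

attribute [local instance] Classical.propDecidable

variable (hr : r ∈ s) (hπr : π r = r) (hcl : ∀ a ∈ s, π a ∈ s)
  (hreach : ∀ a ∈ s, ∃ n, π^[n] a = r)

/-- Height of a vertex in the parent forest. -/
noncomputable def hgt (hreach : ∀ a ∈ s, ∃ n, π^[n] a = r) (a : ↥s) : ℕ :=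
  Nat.find (hreach a a.2)

include hreach

lemma hgt_spec (a : ↥s) : π^[hgt hreach a] a = r := Nat.find_spec (hreach a a.2)

lemma hgt_le (a : ↥s) {n : ℕ} (h : π^[n] (a : α) = r) : hgt hreach a ≤ n :=
  Nat.find_le h

lemma hgt_zero_iff (a : ↥s) : hgt hreach a = 0 ↔ (a : α) = r := by
  constructor
  · intro h
    have := hgt_spec hreach a
    rw [h] at this
    simpa using this
  · intro h
    have : π^[0] (a : α) = r := by simpa using h
    have := hgt_le hreach a this
    omega

lemma parent_ne (a : ↥s) (ha : (a : α) ≠ r) : π (a : α) ≠ (a : α) := by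
  intro h
  have h2 := hgt_spec hreach a
  rw [Function.iterate_fixed h] at h2
  exact ha h2

lemma hgt_parent_lt (a : ↥s) (ha : (a : α) ≠ r) (hmem : π (a : α) ∈ s) :
    hgt hreach ⟨π a, hmem⟩ < hgt hreach a := by
  have h2 := hgt_spec hreach a
  have hpos : 0 < hgt hreach a := by
    rcases Nat.eq_zero_or_pos (hgt hreach a) with h | h
    · exact absurd ((hgt_zero_iff hreach a).1 h) ha
    · exact h
  have heq : (hgt hreach a - 1) + 1 = hgt hreach a := by omega
  rw [← heq, Function.iterate_succ_apply] at h2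
  have h3 := hgt_le hreach ⟨π a, hmem⟩ h2
  omega

include hcl in
omit hπr in
lemma reach_root (a : ↥s) : (parentGraph s π).Reachable a ⟨r, hr⟩ := by
  generalize hn : hgt hreach a = n
  induction n using Nat.strong_induction_on generalizing a with
  | _ n ih =>
    by_cases ha : (a : α) = r
    · rw [show a = (⟨r, hr⟩ : ↥s) from Subtype.ext ha]
    · have hmem : π (a : α) ∈ s := hcl a a.2
      have hadj : (parentGraph s π).Adj a ⟨π a, hmem⟩ :=
        ⟨fun h => parent_ne hreach a ha h.symm, Or.inl rfl⟩
      have hlt := hgt_parent_lt hreach a ha hmem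
      rw [hn] at hlt
      exact (hadj.reachable).trans (ih _ hlt _ rfl)

include hr hπr hcl in
lemma parentGraph_connected : (parentGraph s π).Connected := by
  have : Nonempty ↥s := ⟨⟨r, hr⟩⟩
  rw [connected_iff]
  refine ⟨fun a b => ?_, this⟩
  exact (reach_root hr hcl hreach a).trans (reach_root hr hcl hreach b).symm

include hπr in
lemma parentGraph_acyclic : (parentGraph s π).IsAcyclic := by
  intro v c hc
  have hne : c.support.toFinset.Nonempty := by
    rw [List.toFinset_nonempty_iff]
    exact c.support_ne_nil
  obtain ⟨x, hx, hmax⟩ := c.support.toFinset.exists_max_image (hgt hreach) hne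
  rw [List.mem_toFinset] at hx
  have hc' := hc.rotate hx
  have hsupp : ∀ z, z ∈ (c.rotate x hx).support → z ∈ c.support := by
    intro z hz
    rw [Walk.rotate, Walk.mem_support_append_iff] at hz
    rcases hz with hz | hz
    · exact Walk.support_dropUntil_subset_support c hx hz
    · exact Walk.support_takeUntil_subset_support c hx hz
  have hlen : 3 ≤ (c.rotate x hx).length := hc'.three_le_length
  have hadj1 : (parentGraph s π).Adj x ((c.rotate x hx).getVert 1) := by
    simpa using (c.rotate x hx).adj_getVert_succ (by omega : 0 < (c.rotate x hx).length)
  have hadj2 : (parentGraph s π).Adj ((c.rotate x hx).getVert ((c.rotate x hx).length - 1)) x := by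
    have := (c.rotate x hx).adj_getVert_succ (i := (c.rotate x hx).length - 1) (by omega)
    rwa [show (c.rotate x hx).length - 1 + 1 = (c.rotate x hx).length by omega,
      (c.rotate x hx).getVert_length] at this
  have hne12 := cycle_snd_ne_penultimate (c.rotate x hx) hc'
  have hxne : ∀ y : ↥s, (parentGraph s π).Adj x y → y ∈ c.support → π (x : α) = y := by
    intro y hadj hy
    rcases hadj.2 with h | h
    · exact h
    · exfalso
      have hyr : (y : α) ≠ r := by
        intro h0
        exact hadj.1 (by rw [← h, h0, hπr])
      have hmem' : π (y : α) ∈ s := by rw [h]; exact x.2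
      have h1 : hgt hreach ⟨π (y : α), hmem'⟩ < hgt hreach y := hgt_parent_lt hreach y hyr hmem'
      have he : (⟨π (y : α), hmem'⟩ : ↥s) = x := Subtype.ext h
      rw [he] at h1
      have h2 : hgt hreach y ≤ hgt hreach x := hmax y (List.mem_toFinset.2 hy)
      omega
  have m1 : (c.rotate x hx).getVert 1 ∈ c.support :=
    hsupp _ (getVert_mem_support _ (by omega))
  have m2 : (c.rotate x hx).getVert ((c.rotate x hx).length - 1) ∈ c.support :=
    hsupp _ (getVert_mem_support _ (by omega))
  have e1 := hxne _ hadj1 m1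
  have e2 := hxne _ hadj2.symm m2
  exact hne12 (Subtype.ext (by rw [← e1, ← e2]))

include hr hπr hcl in
lemma parentGraph_isTree : (parentGraph s π).IsTree :=
  ⟨parentGraph_connected hr hπr hcl hreach, parentGraph_acyclic hπr hreach⟩

end

lemma exists_maxclique (G : SimpleGraph V) {c : Set V} (hc : G.IsClique c) :
    ∃ K, Maximal G.IsClique K ∧ c ⊆ K := by
  have hub : ∀ ch ⊆ {t : Set V | G.IsClique t}, IsChain (· ⊆ ·) ch →
      G.IsClique (⋃₀ ch) := by
    intro ch hch hchain x hx y hy hxy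
    obtain ⟨tx, htx, hxtx⟩ := hx
    obtain ⟨ty, hty, hyty⟩ := hy
    rcases eq_or_ne tx ty with rfl | hne'
    · exact hch htx hxtx hyty hxy
    · rcases hchain htx hty hne' with h | h
      · exact hch hty (h hxtx) hyty hxy
      · exact hch htx hxtx (h hyty) hxy
  obtain ⟨m, hsub, hmax⟩ := zorn_subset_nonempty {t : Set V | G.IsClique t}
    (fun ch hch hchain hne => ⟨⋃₀ ch, hub ch hch hchain,
      fun t ht => Set.subset_sUnion_of_mem ht⟩) c hc
  exact ⟨m, hmax, hsub⟩

/-- A partial tree-decomposition into maximal cliques with root bag `r`. -/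
structure PD (G : SimpleGraph V) (r : Set V) where
  s : Set (Set V)
  π : Set V → Set V
  hr : r ∈ s
  hπr : π r = r
  hmax : ∀ K ∈ s, Maximal G.IsClique K
  hcl : ∀ K ∈ s, π K ∈ s
  hreach : ∀ K ∈ s, ∃ n, π^[n] K = r
  hstar : ∀ K ∈ s, ∀ L ∈ s, ∀ w : V, w ∈ K → w ∈ L →
    (K = r ∨ w ∉ π K) → (L = r ∨ w ∉ π L) → K = L
  hedge : ∀ u w : V, u ∈ ⋃₀ s → w ∈ ⋃₀ s → G.Adj u w → ∃ K ∈ s, u ∈ K ∧ w ∈ K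
  hbd : ∀ W : Set V, (∀ x ∈ W, ∀ y ∈ W, ∃ p : G.Walk x y, ∀ z ∈ p.support, z ∈ W) →
    (∀ x ∈ W, x ∉ ⋃₀ s) → ∃ K ∈ s, ∀ x ∈ nbhdSet G W, x ∈ ⋃₀ s → x ∈ K

variable {r : Set V}

instance : Preorder (PD G r) where
  le p q := p.s ⊆ q.s ∧ ∀ K ∈ p.s, q.π K = p.π K
  le_refl p := ⟨subset_rfl, fun _ _ => rfl⟩
  le_trans p q t h1 h2 := ⟨h1.1.trans h2.1,
    fun K hK => ((h2.2 K (h1.1 hK)).trans (h1.2 K hK))⟩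

lemma finite_mem_chain_bound {c : Set (PD G r)} (hc : IsChain (· ≤ ·) c) (hne : c.Nonempty)
    {F : Set V} (hF : F.Finite) (h : ∀ x ∈ F, ∃ p ∈ c, x ∈ ⋃₀ p.s) :
    ∃ p ∈ c, ∀ x ∈ F, x ∈ ⋃₀ p.s := by
  refine Set.Finite.induction_on
    (motive := fun F _ => (∀ x ∈ F, ∃ p ∈ c, x ∈ ⋃₀ p.s) → ∃ p ∈ c, ∀ x ∈ F, x ∈ ⋃₀ p.s) F hF
    (fun _ => ⟨hne.choose, hne.choose_spec, fun x hx => absurd hx (Set.notMem_empty x)⟩) ?_ h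
  intro a F' haF' hF' ih h'
  obtain ⟨p, hp, hpF⟩ := ih (fun x hx => h' x (Set.mem_insert_of_mem a hx))
  obtain ⟨q, hq, hqa⟩ := h' a (Set.mem_insert a F')
  rcases eq_or_ne p q with rfl | hpq
  · exact ⟨p, hp, fun x hx => by
      rcases Set.mem_insert_iff.1 hx with rfl | hx
      · exact hqa
      · exact hpF x hx⟩
  · rcases hc hp hq hpq with hle | hle
    · refine ⟨q, hq, fun x hx => ?_⟩
      rcases Set.mem_insert_iff.1 hx with rfl | hx
      · exact hqa
      · obtain ⟨K, hK, hxK⟩ := hpF x hx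
        exact ⟨K, hle.1 hK, hxK⟩
    · refine ⟨p, hp, fun x hx => ?_⟩
      rcases Set.mem_insert_iff.1 hx with rfl | hx
      · obtain ⟨K, hK, hxK⟩ := hqa
        exact ⟨K, hle.1 hK, hxK⟩
      · exact hpF x hx

lemma chain_bound (hnoinf : ∀ s : Set V, G.IsClique s → s.Finite)
    (c : Set (PD G r)) (hc : IsChain (· ≤ ·) c) (hne : c.Nonempty) :
    BddAbove c := by
  classical
  set sU : Set (Set V) := ⋃ p ∈ c, p.s with hsU
  have hmem : ∀ K, K ∈ sU ↔ ∃ p ∈ c, K ∈ p.s := by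
    intro K; simp [hsU]
  set πU : Set V → Set V := fun K =>
    if h : ∃ p ∈ c, K ∈ p.s then h.choose.π K else K with hπU
  have hcompat : ∀ p ∈ c, ∀ K ∈ p.s, πU K = p.π K := by
    intro p hp K hK
    have h : ∃ p ∈ c, K ∈ p.s := ⟨p, hp, hK⟩
    obtain ⟨hqc, hKq⟩ := h.choose_spec
    simp only [hπU, dif_pos h]
    rcases eq_or_ne h.choose p with he | hne'
    · rw [he]
    · rcases hc hqc hp hne' with hle | hle
      · exact (hle.2 K hKq).symm
      · exact hle.2 K hK
  have hiter : ∀ p ∈ c, ∀ K ∈ p.s, ∀ n, πU^[n] K = p.π^[n] K ∧ p.π^[n] K ∈ p.s := by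
    intro p hp K hK n
    induction n with
    | zero => exact ⟨rfl, hK⟩
    | succ n ihn =>
      rw [Function.iterate_succ_apply', Function.iterate_succ_apply', ihn.1,
        hcompat p hp _ ihn.2]
      exact ⟨rfl, p.hcl _ ihn.2⟩
  have hUsub : ∀ p ∈ c, ∀ x, x ∈ ⋃₀ p.s → x ∈ ⋃₀ sU := by
    intro p hp x ⟨K, hK, hxK⟩
    exact ⟨K, (hmem K).2 ⟨p, hp, hK⟩, hxK⟩
  obtain ⟨p₀, hp₀⟩ := hne
  refine ⟨⟨sU, πU, (hmem r).2 ⟨p₀, hp₀, p₀.hr⟩, ?_, ?_, ?_, ?_, ?_, ?_, ?_⟩, ?_⟩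
  · rw [hcompat p₀ hp₀ r p₀.hr]; exact p₀.hπr
  · intro K hK
    obtain ⟨p, hp, hKp⟩ := (hmem K).1 hK
    exact p.hmax K hKp
  · intro K hK
    obtain ⟨p, hp, hKp⟩ := (hmem K).1 hK
    rw [hcompat p hp K hKp]
    exact (hmem _).2 ⟨p, hp, p.hcl K hKp⟩
  · intro K hK
    obtain ⟨p, hp, hKp⟩ := (hmem K).1 hK
    obtain ⟨n, hn⟩ := p.hreach K hKp
    exact ⟨n, by rw [(hiter p hp K hKp n).1]; exact hn⟩
  · intro K hK L hL w hwK hwL htopK htopL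
    obtain ⟨p, hp, hKp⟩ := (hmem K).1 hK
    obtain ⟨q, hq, hLq⟩ := (hmem L).1 hL
    have : ∃ t ∈ c, K ∈ t.s ∧ L ∈ t.s := by
      rcases eq_or_ne p q with rfl | hpq
      · exact ⟨p, hp, hKp, hLq⟩
      · rcases hc hp hq hpq with hle | hle
        · exact ⟨q, hq, hle.1 hKp, hLq⟩
        · exact ⟨p, hp, hKp, hle.1 hLq⟩
    obtain ⟨t, ht, hKt, hLt⟩ := this
    rw [hcompat t ht K hKt] at htopK
    rw [hcompat t ht L hLt] at htopL
    exact t.hstar K hKt L hLt w hwK hwL htopK htopL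
  · intro u w hu hw hadj
    obtain ⟨K, hK, huK⟩ := hu
    obtain ⟨L, hL, hwL⟩ := hw
    obtain ⟨p, hp, hKp⟩ := (hmem K).1 hK
    obtain ⟨q, hq, hLq⟩ := (hmem L).1 hL
    have : ∃ t ∈ c, K ∈ t.s ∧ L ∈ t.s := by
      rcases eq_or_ne p q with rfl | hpq
      · exact ⟨p, hp, hKp, hLq⟩
      · rcases hc hp hq hpq with hle | hle
        · exact ⟨q, hq, hle.1 hKp, hLq⟩
        · exact ⟨p, hp, hKp, hle.1 hLq⟩
    obtain ⟨t, ht, hKt, hLt⟩ := this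
    obtain ⟨M, hM, hM2⟩ := t.hedge u w ⟨K, hKt, huK⟩ ⟨L, hLt, hwL⟩ hadj
    exact ⟨M, (hmem M).2 ⟨t, ht, hM⟩, hM2⟩
  · intro W hWconn hWdisj
    set N := {x | x ∈ nbhdSet G W ∧ x ∈ ⋃₀ sU} with hN
    have hNclique : G.IsClique N := by
      intro x hx y hy hxy
      obtain ⟨K, hK, hxK⟩ := hx.2
      obtain ⟨L, hL, hyL⟩ := hy.2
      obtain ⟨p, hp, hKp⟩ := (hmem K).1 hK
      obtain ⟨q, hq, hLq⟩ := (hmem L).1 hL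
      have : ∃ t ∈ c, K ∈ t.s ∧ L ∈ t.s := by
        rcases eq_or_ne p q with rfl | hpq
        · exact ⟨p, hp, hKp, hLq⟩
        · rcases hc hp hq hpq with hle | hle
          · exact ⟨q, hq, hle.1 hKp, hLq⟩
          · exact ⟨p, hp, hKp, hle.1 hLq⟩
      obtain ⟨t, ht, hKt, hLt⟩ := this
      obtain ⟨M, hMt, hMsub⟩ := t.hbd W hWconn
        (fun z hz hzU => hWdisj z hz (hUsub t ht z hzU))
      have hxM : x ∈ M := hMsub x hx.1 ⟨K, hKt, hxK⟩
      have hyM : y ∈ M := hMsub y hy.1 ⟨L, hLt, hyL⟩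
      exact (t.hmax M hMt).1 hxM hyM hxy
    have hNfin : N.Finite := hnoinf N hNclique
    obtain ⟨q, hq, hqN⟩ := finite_mem_chain_bound hc ⟨p₀, hp₀⟩ hNfin
      (fun x hx => by
        obtain ⟨K, hK, hxK⟩ := hx.2
        obtain ⟨p, hp, hKp⟩ := (hmem K).1 hK
        exact ⟨p, hp, K, hKp, hxK⟩)
    obtain ⟨M, hMq, hMsub⟩ := q.hbd W hWconn
      (fun z hz hzU => hWdisj z hz (hUsub q hq z hzU))
    refine ⟨M, (hmem M).2 ⟨q, hq, hMq⟩, fun x hx hxU => ?_⟩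
    exact hMsub x hx (hqN x ⟨hx, hxU⟩)
  · intro p hp
    exact ⟨fun K hK => (hmem K).2 ⟨p, hp, hK⟩, fun K hK => hcompat p hp K hK⟩


lemma extend_PD (hch : IsChordal G) (hnoinf : ∀ t : Set V, G.IsClique t → t.Finite)
    (p : PD G r) (v : V) (hv : v ∉ ⋃₀ p.s) :
    ∃ q : PD G r, p ≤ q ∧ ¬ q ≤ p := by
  classical
  set U := ⋃₀ p.s with hU
  set C := {w | w ∉ U ∧ ∃ q : G.Walk v w, ∀ z ∈ q.support, z ∉ U} with hC
  have hvC : v ∈ C := ⟨hv, Walk.nil, by simp [hv]⟩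
  have hCU : ∀ w ∈ C, w ∉ U := fun w hw => hw.1
  have hclosure : ∀ x ∈ C, ∀ w, G.Adj x w → w ∉ U → w ∈ C := by
    rintro x ⟨hxU, q, hq⟩ w hadj hwU
    refine ⟨hwU, q.concat hadj, ?_⟩
    intro z hz
    rw [Walk.support_concat, List.mem_append] at hz
    rcases hz with hz | hz
    · exact hq z hz
    · rw [List.mem_singleton] at hz; subst hz; exact hwU
  have hwalkC : ∀ {x : V} (q : G.Walk v x), (∀ z ∈ q.support, z ∉ U) →
      ∀ z ∈ q.support, z ∈ C := by
    intro x q hq z hz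
    obtain ⟨n, hn, hnle⟩ := Walk.mem_support_iff_exists_getVert.1 hz
    obtain ⟨q', hq'len, hq'supp⟩ := exists_take q n hnle
    refine ⟨hq z hz, q'.copy rfl hn, ?_⟩
    intro z' hz'
    rw [Walk.support_copy] at hz'
    exact hq z' (hq'supp z' hz')
  have hCconn : ∀ x ∈ C, ∀ y ∈ C, ∃ pxy : G.Walk x y, ∀ z ∈ pxy.support, z ∈ C := by
    rintro x ⟨hxU, q1, hq1⟩ y ⟨hyU, q2, hq2⟩
    refine ⟨q1.reverse.append q2, ?_⟩
    intro z hz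
    rw [Walk.mem_support_append_iff] at hz
    rcases hz with hz | hz
    · rw [Walk.support_reverse, List.mem_reverse] at hz
      exact hwalkC q1 hq1 z hz
    · exact hwalkC q2 hq2 z hz
  -- the attachment set
  set S := nbhdSet G C with hS
  have hSU : ∀ a ∈ S, a ∈ U := by
    rintro a ⟨haC, u, huC, hadj⟩
    by_contra haU
    exact haC (hclosure u huC a hadj haU)
  obtain ⟨L₀, hL₀mem, hL₀⟩ := p.hbd C hCconn hCU
  have hSL₀ : ∀ a ∈ S, a ∈ L₀ := fun a ha => hL₀ a ha (hSU a ha)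
  have hSclique : G.IsClique S := ((p.hmax L₀ hL₀mem).1).subset hSL₀
  obtain ⟨u', hu'C, hu'⟩ := complete_vertex hch C hCconn ⟨v, hvC⟩ S (hnoinf S hSclique)
    hSclique (fun a ha => ha.1) (fun a ha => ⟨ha.2.choose, ha.2.choose_spec.1,
      ha.2.choose_spec.2.symm⟩)
  have hins : G.IsClique (insert u' S) := by
    intro x hx y hy hxy
    rcases Set.mem_insert_iff.1 hx with h1 | h1
    · rcases Set.mem_insert_iff.1 hy with h2 | h2
      · exact absurd (h1.trans h2.symm) hxy
      · rw [h1]; exact hu' y h2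
    · rcases Set.mem_insert_iff.1 hy with h2 | h2
      · rw [h2]; exact (hu' x h1).symm
      · exact hSclique h1 h2 hxy
  obtain ⟨K', hK'max, hK'sub⟩ := exists_maxclique G hins
  have hu'K' : u' ∈ K' := hK'sub (Set.mem_insert u' S)
  have hSK' : ∀ a ∈ S, a ∈ K' := fun a ha => hK'sub (Set.mem_insert_of_mem u' ha)
  have hK'CS : ∀ w ∈ K', w ∈ C ∨ w ∈ S := by
    intro w hw
    rcases eq_or_ne w u' with rfl | hne
    · exact Or.inl hu'C
    · have hadj : G.Adj u' w := hK'max.1 hu'K' hw (fun h => hne h.symm)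
      by_cases hwU : w ∈ U
      · right
        refine ⟨fun hwC => hCU w hwC hwU, u', hu'C, hadj⟩
      · exact Or.inl (hclosure u' hu'C w hadj hwU)
  have hK'new : K' ∉ p.s := by
    intro hmem
    exact hCU u' hu'C ⟨K', hmem, hu'K'⟩
  have hKr : r ≠ K' := fun h => hK'new (h ▸ p.hr)
  set π' : Set V → Set V := fun K => if K = K' then L₀ else p.π K with hπ'
  have hπ'old : ∀ K ∈ p.s, π' K = p.π K := by
    intro K hK
    simp only [hπ']
    rw [if_neg (fun h => hK'new (by rw [← h]; exact hK))]
  have hπ'K' : π' K' = L₀ := by simp [hπ']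
  have hiter : ∀ K ∈ p.s, ∀ n, π'^[n] K = p.π^[n] K ∧ p.π^[n] K ∈ p.s := by
    intro K hK n
    induction n with
    | zero => exact ⟨rfl, hK⟩
    | succ n ihn =>
      rw [Function.iterate_succ_apply', Function.iterate_succ_apply', ihn.1,
        hπ'old _ ihn.2]
      exact ⟨rfl, p.hcl _ ihn.2⟩
  refine ⟨⟨insert K' p.s, π', Set.mem_insert_of_mem _ p.hr, ?_, ?_, ?_, ?_, ?_, ?_, ?_⟩,
    ⟨Set.subset_insert _ _, fun K hK => hπ'old K hK⟩, fun hle => hK'new (hle.1 (Set.mem_insert _ _))⟩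
  · rw [hπ'old r p.hr]; exact p.hπr
  · intro K hK
    rcases Set.mem_insert_iff.1 hK with rfl | hK
    · exact hK'max
    · exact p.hmax K hK
  · intro K hK
    rcases Set.mem_insert_iff.1 hK with rfl | hK
    · rw [hπ'K']; exact Set.mem_insert_of_mem _ hL₀mem
    · rw [hπ'old K hK]; exact Set.mem_insert_of_mem _ (p.hcl K hK)
  · intro K hK
    rcases Set.mem_insert_iff.1 hK with rfl | hK
    · obtain ⟨n, hn⟩ := p.hreach L₀ hL₀mem
      refine ⟨n + 1, ?_⟩
      rw [Function.iterate_succ_apply, hπ'K', (hiter L₀ hL₀mem n).1]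
      exact hn
    · obtain ⟨n, hn⟩ := p.hreach K hK
      exact ⟨n, by rw [(hiter K hK n).1]; exact hn⟩
  · intro K hK L hL w hwK hwL htopK htopL
    rcases Set.mem_insert_iff.1 hK with h1 | h1
    · rcases Set.mem_insert_iff.1 hL with h2 | h2
      · rw [h1, h2]
      · exfalso
        rw [h1] at htopK hwK
        have hwC : w ∈ C := by
          rcases hK'CS w hwK with h | h
          · exact h
          · exfalso
            rcases htopK with h' | h'
            · exact hKr h'.symm
            · rw [hπ'K'] at h'
              exact h' (hSL₀ w h)
        exact hCU w hwC ⟨L, h2, hwL⟩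
    · rcases Set.mem_insert_iff.1 hL with h2 | h2
      · exfalso
        rw [h2] at htopL hwL
        have hwC : w ∈ C := by
          rcases hK'CS w hwL with h | h
          · exact h
          · exfalso
            rcases htopL with h' | h'
            · exact hKr h'.symm
            · rw [hπ'K'] at h'
              exact h' (hSL₀ w h)
        exact hCU w hwC ⟨K, h1, hwK⟩
      · rw [hπ'old K h1] at htopK
        rw [hπ'old L h2] at htopL
        exact p.hstar K h1 L h2 w hwK hwL htopK htopL
  · intro x w hx hw hadj
    have hsU : ⋃₀ insert K' p.s = K' ∪ U := by
      rw [Set.sUnion_insert]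
    rw [hsU] at hx hw
    by_cases hxU : x ∈ U <;> by_cases hwU : w ∈ U
    · obtain ⟨M, hM, hM2⟩ := p.hedge x w hxU hwU hadj
      exact ⟨M, Set.mem_insert_of_mem _ hM, hM2⟩
    · have hwK' : w ∈ K' := by rcases hw with h | h; exact h; exact absurd h hwU
      have hwC : w ∈ C := by
        rcases hK'CS w hwK' with h | h
        · exact h
        · exact absurd (hSU w h) hwU
      have hxS : x ∈ S := ⟨fun h => hCU x h hxU, w, hwC, hadj.symm⟩
      exact ⟨K', Set.mem_insert _ _, hSK' x hxS, hwK'⟩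
    · have hxK' : x ∈ K' := by rcases hx with h | h; exact h; exact absurd h hxU
      have hxC : x ∈ C := by
        rcases hK'CS x hxK' with h | h
        · exact h
        · exact absurd (hSU x h) hxU
      have hwS : w ∈ S := ⟨fun h => hCU w h hwU, x, hxC, hadj⟩
      exact ⟨K', Set.mem_insert _ _, hxK', hSK' w hwS⟩
    · have hxK' : x ∈ K' := by rcases hx with h | h; exact h; exact absurd h hxU
      have hwK' : w ∈ K' := by rcases hw with h | h; exact h; exact absurd h hwU
      exact ⟨K', Set.mem_insert _ _, hxK', hwK'⟩
  · intro W hWconn hWdisj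
    have hsU : ⋃₀ insert K' p.s = K' ∪ U := by
      rw [Set.sUnion_insert]
    rw [hsU] at hWdisj ⊢
    by_cases hWC : ∃ w₀ ∈ W, w₀ ∈ C
    · obtain ⟨w₀, hw₀W, hw₀C⟩ := hWC
      refine ⟨K', Set.mem_insert _ _, ?_⟩
      rintro x ⟨hxW, d, hdW, hadj⟩ hxKU
      have hdC : d ∈ C := by
        obtain ⟨hw₀U, q0, hq0⟩ := hw₀C
        obtain ⟨qd, hqd⟩ := hWconn w₀ hw₀W d hdW
        have : ∀ z ∈ (q0.append qd).support, z ∉ U := by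
          intro z hz
          rw [Walk.mem_support_append_iff] at hz
          rcases hz with hz | hz
          · exact hq0 z hz
          · intro hzU
            exact hWdisj z (hqd z hz) (Or.inr hzU)
        exact ⟨fun h => hWdisj d hdW (Or.inr h), q0.append qd, this⟩
      rcases hxKU with hxK | hxU
      · exact hxK
      · have hxS : x ∈ S := ⟨fun h => hCU x h hxU, d, hdC, hadj⟩
        exact hSK' x hxS
    · push_neg at hWC
      obtain ⟨M, hM, hMsub⟩ := p.hbd W hWconn
        (fun z hz hzU => hWdisj z hz (Or.inr hzU))
      refine ⟨M, Set.mem_insert_of_mem _ hM, ?_⟩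
      rintro x ⟨hxW, d, hdW, hadj⟩ hxKU
      by_cases hxU : x ∈ U
      · exact hMsub x ⟨hxW, d, hdW, hadj⟩ hxU
      · exfalso
        have hxK : x ∈ K' := by
          rcases hxKU with h | h
          · exact h
          · exact absurd h hxU
        have hxC : x ∈ C := by
          rcases hK'CS x hxK with h | h
          · exact h
          · exact absurd (hSU x h) hxU
        have hdU : d ∉ U := fun h => hWdisj d hdW (Or.inr h)
        exact hWC d hdW (hclosure x hxC d hadj.symm hdU)

end AuxC
end AuxChordal


open AuxC in
theorem stmt3 {V : Type u} (G : SimpleGraph V) (hchordal : IsChordal G)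
    (hnoinf : ∀ s : Set V, G.IsClique s → s.Finite) :
    ∃ (ι : Type u) (T : SimpleGraph ι) (bag : ι → Set V),
      IsTreeDecomp G T bag ∧ ∀ t, Maximal G.IsClique (bag t) := by
  classical
  obtain ⟨r, hrmax, -⟩ := exists_maxclique G (G.isClique_empty)
  have p₀ : PD G r :=
    { s := {r}
      π := fun _ => r
      hr := rfl
      hπr := rfl
      hmax := fun K hK => by rw [Set.mem_singleton_iff] at hK; rw [hK]; exact hrmax
      hcl := fun K _ => rfl
      hreach := fun K _ => ⟨1, rfl⟩
      hstar := fun K hK L hL _ _ _ _ _ => by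
        rw [Set.mem_singleton_iff] at hK hL; rw [hK, hL]
      hedge := fun u w hu hw _ => by
        rw [Set.sUnion_singleton] at hu hw
        exact ⟨r, rfl, hu, hw⟩
      hbd := fun W _ _ => ⟨r, rfl, fun x _ hxU => by rwa [Set.sUnion_singleton] at hxU⟩ }
  haveI : Nonempty (PD G r) := ⟨p₀⟩
  obtain ⟨m, hm⟩ := zorn_le_nonempty (α := PD G r) (fun c hc hne => chain_bound hnoinf c hc hne)
  have hU : ∀ w : V, w ∈ ⋃₀ m.s := by
    intro w
    by_contra hw
    obtain ⟨q, hle, hnle⟩ := extend_PD hchordal hnoinf m w hw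
    exact hnle (hm hle)
  refine ⟨↥m.s, parentGraph m.s m.π, fun t => (t : Set V), ⟨?_, ?_, ?_, ?_⟩, ?_⟩
  · exact parentGraph_isTree m.hr m.hπr m.hcl m.hreach
  · intro v
    obtain ⟨K, hK, hvK⟩ := hU v
    exact ⟨⟨K, hK⟩, hvK⟩
  · intro u v hadj
    obtain ⟨K, hK, h1, h2⟩ := m.hedge u v (hU u) (hU v) hadj
    exact ⟨⟨K, hK⟩, h1, h2⟩
  · intro v
    set A : Set ↥m.s := {t | v ∈ (t : Set V)} with hA
    set T := parentGraph m.s m.π with hT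
    have hstep : ∀ n (t : ↥m.s) (ht : t ∈ A), hgt m.hreach t = n →
        ∃ (t' : ↥m.s) (ht' : t' ∈ A), ((t' : Set V) = r ∨ v ∉ m.π (t' : Set V)) ∧
          (T.induce A).Reachable ⟨t, ht⟩ ⟨t', ht'⟩ := by
      intro n
      induction n using Nat.strong_induction_on with
      | _ n ih =>
        intro t ht hn
        by_cases htop : (t : Set V) = r ∨ v ∉ m.π (t : Set V)
        · exact ⟨t, ht, htop, Reachable.refl _⟩
        · push_neg at htop
          obtain ⟨hne', hvπ⟩ := htop
          have hmem : m.π (t : Set V) ∈ m.s := m.hcl _ t.2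
          set pt : ↥m.s := ⟨m.π (t : Set V), hmem⟩ with hpt
          have hptA : pt ∈ A := hvπ
          have hadj : (T.induce A).Adj ⟨t, ht⟩ ⟨pt, hptA⟩ := by
            show T.Adj t pt
            exact ⟨fun h => parent_ne m.hreach t hne' h.symm, Or.inl rfl⟩
          have hlt := hgt_parent_lt m.hreach t hne' hmem
          rw [hn] at hlt
          obtain ⟨t', ht', htop', hreach'⟩ := ih _ hlt pt hptA rfl
          exact ⟨t', ht', htop', hadj.reachable.trans hreach'⟩
    rw [connected_iff]
    constructor
    · rintro ⟨a, ha⟩ ⟨b, hb⟩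
      obtain ⟨ta, hta, htopa, hra⟩ := hstep (hgt m.hreach a) a ha rfl
      obtain ⟨tb, htb, htopb, hrb⟩ := hstep (hgt m.hreach b) b hb rfl
      have : (ta : Set V) = (tb : Set V) :=
        m.hstar _ ta.2 _ tb.2 v hta htb htopa htopb
      have heq : ta = tb := Subtype.ext this
      subst heq
      have heq2 : (⟨ta, hta⟩ : ↥A) = ⟨ta, htb⟩ := rfl
      exact hra.trans (heq2 ▸ hrb.symm)
    · obtain ⟨K, hK, hvK⟩ := hU v
      exact ⟨⟨⟨K, hK⟩, hvK⟩⟩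
  · intro t
    exact m.hmax _ t.2
end

section
/- Every chordal graph containing no strict comb of cliques admits a tree-decomposition all of whose parts are maximal cliques. -/
open SimpleGraph

variable {V W : Type*}

universe u

set_option linter.unusedTactic false
set_option linter.unusedVariables false

namespace Stmt4

open Relation

variable {V : Type u} (G : SimpleGraph V)

def Rel (X : Set V) (a b : V) : Prop := G.Adj a b ∧ a ∈ X ∧ b ∈ X

lemma rel_symm (X : Set V) : Symmetric (Rel G X) := fun _ _ h => ⟨h.1.symm, h.2.2, h.2.1⟩

def CompOf (v : V) (X : Set V) : Set V :=
  {w | w ∈ X ∧ Relation.ReflTransGen (Rel G X) v w}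

variable {G}

lemma mem_compOf_self {v : V} {X : Set V} (h : v ∈ X) : v ∈ CompOf G v X :=
  ⟨h, Relation.ReflTransGen.refl⟩

lemma compOf_subset {v : V} {X : Set V} : CompOf G v X ⊆ X := fun _ hw => hw.1

lemma compOf_reaches {v w : V} {X : Set V} (hw : w ∈ CompOf G v X) :
    Relation.ReflTransGen (Rel G X) v w := hw.2

lemma mem_compOf {v w : V} {X : Set V} (h : w ∈ X)
    (hr : Relation.ReflTransGen (Rel G X) v w) : w ∈ CompOf G v X := ⟨h, hr⟩

lemma compOf_closed {v w y : V} {X : Set V} (hw : w ∈ CompOf G v X)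
    (hadj : G.Adj w y) (hy : y ∈ X) : y ∈ CompOf G v X :=
  ⟨hy, hw.2.tail ⟨hadj, hw.1, hy⟩⟩

lemma reflTransGen_symm {X : Set V} {a b : V}
    (h : Relation.ReflTransGen (Rel G X) a b) : Relation.ReflTransGen (Rel G X) b a :=
  (haveI : Std.Symm (Rel G X) := ⟨fun a b h => rel_symm G X h⟩
   Std.Symm.symm (r := Relation.ReflTransGen (Rel G X)) _ _ h)

lemma compOf_eq_of_mem {v u : V} {X : Set V} (hu : u ∈ CompOf G v X) :
    CompOf G u X = CompOf G v X := by
  ext w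
  constructor
  · intro hw
    exact mem_compOf hw.1 ((compOf_reaches hu).trans (compOf_reaches hw))
  · intro hw
    exact mem_compOf hw.1 ((reflTransGen_symm (compOf_reaches hu)).trans (compOf_reaches hw))

/-- `C` is a connected component of the induced subgraph on `X`. -/
def IsComp (X C : Set V) : Prop := ∃ v ∈ X, C = CompOf G v X

lemma IsComp.nonempty {X C : Set V} (h : IsComp (G := G) X C) : C.Nonempty := by
  obtain ⟨v, hv, rfl⟩ := h; exact ⟨v, mem_compOf_self hv⟩

lemma IsComp.subset {X C : Set V} (h : IsComp (G := G) X C) : C ⊆ X := by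
  obtain ⟨v, hv, rfl⟩ := h; exact compOf_subset

lemma IsComp.closed {X C : Set V} (h : IsComp (G := G) X C) {w y : V}
    (hw : w ∈ C) (hadj : G.Adj w y) (hy : y ∈ X) : y ∈ C := by
  obtain ⟨v, hv, rfl⟩ := h; exact compOf_closed hw hadj hy

lemma IsComp.conn {X C : Set V} (h : IsComp (G := G) X C) {a b : V}
    (ha : a ∈ C) (hb : b ∈ C) : Relation.ReflTransGen (Rel G X) a b := by
  obtain ⟨v, hv, rfl⟩ := h
  exact (reflTransGen_symm (compOf_reaches ha)).trans (compOf_reaches hb)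

lemma IsComp.eq_compOf {X C : Set V} (h : IsComp (G := G) X C) {v : V} (hv : v ∈ C) :
    C = CompOf G v X := by
  obtain ⟨w, hw, rfl⟩ := h; exact (compOf_eq_of_mem hv).symm

/-- every clique extends to a maximal clique -/
lemma exists_maximal_clique (s : Set V) (hs : G.IsClique s) :
    ∃ R, s ⊆ R ∧ Maximal G.IsClique R := by
  obtain ⟨m, hsm, hm⟩ := zorn_subset_nonempty {t : Set V | G.IsClique t ∧ s ⊆ t}
    (fun c hc hchain hne => by
      refine ⟨⋃₀ c, ⟨?_, ?_⟩, fun t ht => Set.subset_sUnion_of_mem ht⟩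
      · intro a ha b hb hab
        obtain ⟨ta, hta, hat⟩ := ha
        obtain ⟨tb, htb, hbt⟩ := hb
        rcases hchain.total hta htb with hsub | hsub
        · exact (hc htb).1 (hsub hat) hbt hab
        · exact (hc hta).1 hat (hsub hbt) hab
      · obtain ⟨t, ht⟩ := hne
        exact (hc ht).2.trans (Set.subset_sUnion_of_mem ht))
    s ⟨hs, subset_rfl⟩
  refine ⟨m, hm.1.2, hm.1.1, fun y hy hmy => ?_⟩
  exact hm.2 ⟨hy, hm.1.2.trans hmy⟩ hmy


section Chordal

/-- The key consequence of chordality: if `x 0, …, x m` is an induced path inside some set,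
`t` is adjacent to `x 0` and to `s` but to no later `x i`, `s` is adjacent to `x m` but to
no earlier `x i`, and `t, s` are off the path and distinct, we get an induced cycle. -/
lemma chordal_fan (hch : IsChordal G) {m : ℕ} (x : ℕ → V) (t s : V)
    (hm : 1 ≤ m)
    (hadjx : ∀ i, i < m → G.Adj (x i) (x (i + 1)))
    (hind : ∀ i j, i + 2 ≤ j → j ≤ m → ¬ G.Adj (x i) (x j))
    (hinj : ∀ i j, i ≤ m → j ≤ m → x i = x j → i = j)
    (ht0 : G.Adj t (x 0)) (hts : G.Adj t s)
    (htx : ∀ i, 1 ≤ i → i ≤ m → ¬ G.Adj t (x i))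
    (hsm : G.Adj (x m) s)
    (hsx : ∀ i, i < m → ¬ G.Adj s (x i))
    (htc : ∀ i, i ≤ m → t ≠ x i) (hsc : ∀ i, i ≤ m → s ≠ x i) (hst : s ≠ t) : False := by
  classical
  set n := m + 3 with hn
  haveI : NeZero n := ⟨by omega⟩
  haveI : Fact (1 < n) := ⟨by omega⟩
  set F : ℕ → V := fun a => if a = 0 then t else if a ≤ m + 1 then x (a - 1) else s with hF
  -- adjacency of consecutive x-entries, in both orders
  have hadj' : ∀ i j, i ≤ m → j ≤ m → (j = i + 1 ∨ i = j + 1) → G.Adj (x i) (x j) := by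
    rintro i j hi hj (rfl | rfl)
    · exact hadjx i (by omega)
    · exact (hadjx j (by omega)).symm
  have hindsymm : ∀ i j, i ≤ m → j ≤ m → G.Adj (x i) (x j) → (j = i + 1 ∨ i = j + 1) := by
    intro i j hi hj hadj
    by_contra hcon
    push_neg at hcon
    rcases Nat.lt_trichotomy i j with h | h | h
    · exact hind i j (by omega) hj hadj
    · exact (G.loopless.irrefl (x i)) (h ▸ hadj)
    · exact hind j i (by omega) hi hadj.symm
  -- the main natural-number level characterisation
  have key : ∀ a b, a < n → b < n →
      (G.Adj (F a) (F b) ↔ (b = a + 1 ∨ a = b + 1 ∨ (a = 0 ∧ b = m + 2) ∨ (b = 0 ∧ a = m + 2))) := by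
    intro a b ha hb
    rcases Nat.eq_zero_or_pos a with rfl | hapos
    · simp only [hF, if_pos rfl]
      rcases Nat.eq_zero_or_pos b with rfl | hbpos
      · simp only [if_pos rfl]
        constructor
        · intro h; exact absurd rfl (G.ne_of_adj h)
        · intro h; (try simp only [true_and, and_true]); omega
      · by_cases hbmid : b ≤ m + 1
        · simp only [if_neg (by omega : ¬ b = 0), if_pos hbmid]
          constructor
          · intro h
            rcases Nat.eq_or_lt_of_le hbpos with rfl | hb2
            · omega
            · exact absurd h (htx (b - 1) (by omega) (by omega))
          · intro h
            have hb1 : b = 1 := by omega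
            rw [hb1]; exact ht0
        · have hb2 : b = m + 2 := by omega
          simp only [if_neg (by omega : ¬ b = 0), if_neg hbmid]
          constructor
          · intro _; (try simp only [true_and, and_true]); omega
          · intro _; exact hts
    · by_cases hamid : a ≤ m + 1
      · simp only [hF, if_neg (by omega : ¬ a = 0), if_pos hamid]
        rcases Nat.eq_zero_or_pos b with rfl | hbpos
        · simp only [if_pos rfl]
          constructor
          · intro h
            rcases Nat.eq_or_lt_of_le hapos with rfl | ha2
            · omega
            · exact absurd h.symm (htx (a - 1) (by omega) (by omega))
          · intro h
            have ha1 : a = 1 := by omega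
            rw [ha1]; exact ht0.symm
        · by_cases hbmid : b ≤ m + 1
          · simp only [if_neg (by omega : ¬ b = 0), if_pos hbmid]
            constructor
            · intro h
              rcases hindsymm (a - 1) (b - 1) (by omega) (by omega) h with h' | h' <;> omega
            · intro h
              refine hadj' (a - 1) (b - 1) (by omega) (by omega) ?_
              (try simp only [true_and, and_true] at h)
              rcases h with h | h | h | h <;> omega
          · have hb2 : b = m + 2 := by omega
            simp only [if_neg (by omega : ¬ b = 0), if_neg hbmid]
            constructor
            · intro h
              by_cases hlast : a - 1 = m
              · (try simp only [true_and, and_true]); omega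
              · exact absurd h.symm (hsx (a - 1) (by omega))
            · intro h
              have : a - 1 = m := by (try simp only [true_and, and_true] at h); omega
              rw [this]; exact hsm
      · have ha2 : a = m + 2 := by omega
        simp only [hF, if_neg (by omega : ¬ a = 0), if_neg hamid]
        rcases Nat.eq_zero_or_pos b with rfl | hbpos
        · simp only [if_pos rfl]
          constructor
          · intro _; (try simp only [true_and, and_true]); omega
          · intro _; exact hts.symm
        · by_cases hbmid : b ≤ m + 1
          · simp only [if_neg (by omega : ¬ b = 0), if_pos hbmid]
            constructor
            · intro h
              by_cases hlast : b - 1 = m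
              · (try simp only [true_and, and_true]); omega
              · exact absurd h (hsx (b - 1) (by omega))
            · intro h
              have : b - 1 = m := by (try simp only [true_and, and_true] at h); omega
              rw [this]; exact hsm.symm
          · have hb2 : b = m + 2 := by omega
            simp only [if_neg (by omega : ¬ b = 0), if_neg hbmid]
            constructor
            · intro h; exact absurd rfl (G.ne_of_adj h)
            · intro h; (try simp only [true_and, and_true]); omega
  -- injectivity at ℕ level
  have keyinj : ∀ a b, a < n → b < n → F a = F b → a = b := by
    intro a b ha hb hab
    by_contra hne
    have hcat : ∀ c, c < n → (c = 0 ∧ F c = t) ∨ (1 ≤ c ∧ c ≤ m + 1 ∧ F c = x (c - 1)) ∨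
        (c = m + 2 ∧ F c = s) := by
      intro c hc
      rcases Nat.lt_trichotomy c 0 with h | rfl | hcpos
      · omega
      · left; exact ⟨rfl, by simp [hF]⟩
      · by_cases hcm : c ≤ m + 1
        · right; left
          refine ⟨hcpos, hcm, ?_⟩
          simp only [hF]
          rw [if_neg (by omega : ¬ c = 0), if_pos hcm]
        · right; right
          refine ⟨by omega, ?_⟩
          simp only [hF]
          rw [if_neg (by omega : ¬ c = 0), if_neg hcm]
    rcases hcat a ha with ⟨ha0, hFa⟩ | ⟨ha1, ha2, hFa⟩ | ⟨ha0, hFa⟩ <;>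
      rcases hcat b hb with ⟨hb0, hFb⟩ | ⟨hb1, hb2, hFb⟩ | ⟨hb0, hFb⟩ <;>
        rw [hFa, hFb] at hab
    · omega
    · exact htc (b - 1) (by omega) hab
    · exact hst hab.symm
    · exact htc (a - 1) (by omega) hab.symm
    · have := hinj (a - 1) (b - 1) (by omega) (by omega) hab; omega
    · exact hsc (a - 1) (by omega) hab.symm
    · exact hst hab
    · exact hsc (b - 1) (by omega) hab
    · omega
  -- now assemble the ZMod function
  have hval : ∀ i j : ZMod n, j = i + 1 ↔ (j.val = i.val + 1 ∨ (i.val = n - 1 ∧ j.val = 0)) := by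
    intro i j
    have hi := ZMod.val_lt i
    have hj := ZMod.val_lt j
    constructor
    · rintro rfl
      rw [ZMod.val_add, ZMod.val_one]
      by_cases h : i.val = n - 1
      · right
        refine ⟨h, ?_⟩
        rw [h, show n - 1 + 1 = n by omega, Nat.mod_self]
      · left; exact Nat.mod_eq_of_lt (by omega)
    · intro h
      apply ZMod.val_injective
      rw [ZMod.val_add, ZMod.val_one]
      rcases h with h | ⟨h1, h2⟩
      · rw [h]; exact (Nat.mod_eq_of_lt (by omega)).symm
      · rw [h2, h1, show n - 1 + 1 = n by omega, Nat.mod_self]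
  refine hch n (by omega) (fun i => F i.val) ?_ ?_
  · intro i j hij
    exact ZMod.val_injective n (keyinj i.val j.val (ZMod.val_lt i) (ZMod.val_lt j) hij)
  · intro i j
    rw [key i.val j.val (ZMod.val_lt i) (ZMod.val_lt j), hval j i, hval i j]
    have hi := ZMod.val_lt i
    have hj := ZMod.val_lt j
    omega

end Chordal

section Claim1

lemma reflTransGen_toChain {C : Set V} {a b : V} (ha : a ∈ C)
    (h : Relation.ReflTransGen (Rel G C) a b) :
    ∃ (m : ℕ) (x : ℕ → V), x 0 = a ∧ x m = b ∧ (∀ i, i ≤ m → x i ∈ C) ∧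
      (∀ i, i < m → G.Adj (x i) (x (i + 1))) := by
  induction h with
  | refl => exact ⟨0, fun _ => a, rfl, rfl, fun i _ => ha, fun i h => absurd h (by omega)⟩
  | @tail b c hab hbc ih =>
      obtain ⟨m, x, hx0, hxm, hmem, hadj⟩ := ih
      classical
      refine ⟨m + 1, fun i => if i ≤ m then x i else c, ?_, ?_, ?_, ?_⟩
      · show (if 0 ≤ m then x 0 else c) = a
        rw [if_pos (Nat.zero_le m)]; exact hx0
      · show (if m + 1 ≤ m then x (m + 1) else c) = c
        rw [if_neg (by omega)]
      · intro i hi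
        show (if i ≤ m then x i else c) ∈ C
        split
        · next h => exact hmem i h
        · exact hbc.2.2
      · intro i hi
        show G.Adj (if i ≤ m then x i else c) (if i + 1 ≤ m then x (i + 1) else c)
        rcases Nat.lt_or_ge i m with h | h
        · rw [if_pos (by omega), if_pos (by omega)]
          exact hadj i h
        · have him : i = m := by omega
          subst him
          rw [if_pos le_rfl, if_neg (by omega), hxm]
          exact hbc.1

lemma trace_extend (hch : IsChordal G) {C : Set V}
    (hconn : ∀ a ∈ C, ∀ b ∈ C, Relation.ReflTransGen (Rel G C) a b)
    (hScl : G.IsClique (nbhdSet G C))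
    {c s : V} (hc : c ∈ C) (hs : s ∈ nbhdSet G C) (hcs : ¬ G.Adj c s) :
    ∃ c', c' ∈ C ∧ G.Adj c' s ∧ ∀ t ∈ nbhdSet G C, G.Adj c t → G.Adj c' t := by
  classical
  obtain ⟨hsC, u, hu, hus⟩ := hs
  have hP : ∃ m : ℕ, ∃ x : ℕ → V, x 0 = c ∧ (∀ i, i ≤ m → x i ∈ C) ∧
      (∀ i, i < m → G.Adj (x i) (x (i + 1))) ∧ G.Adj (x m) s := by
    obtain ⟨m, x, hx0, hxm, hmem, hadj⟩ := reflTransGen_toChain hc (hconn c hc u hu)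
    exact ⟨m, x, hx0, hmem, hadj, hxm ▸ hus⟩
  set Q : ℕ → Prop := fun m => ∃ x : ℕ → V, x 0 = c ∧ (∀ i, i ≤ m → x i ∈ C) ∧
      (∀ i, i < m → G.Adj (x i) (x (i + 1))) ∧ G.Adj (x m) s with hQ
  have hQex : ∃ m, Q m := hP
  set m₀ := Nat.find hQex with hm₀
  obtain ⟨x, hx0, hmem, hadj, hadjs⟩ := Nat.find_spec hQex
  have hmin : ∀ k, k < m₀ → ¬ Q k := fun k hk => Nat.find_min hQex hk
  have hm1 : 1 ≤ m₀ := by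
    rcases Nat.eq_zero_or_pos m₀ with h | h
    · exfalso
      obtain ⟨x', hx0', _, _, hadjs'⟩ : Q m₀ := ⟨x, hx0, hmem, hadj, hadjs⟩
      rw [h] at hadjs'
      rw [hx0'] at hadjs'
      exact hcs hadjs'
    · exact h
  -- no earlier vertex is adjacent to s
  have hnos : ∀ i, i < m₀ → ¬ G.Adj (x i) s := by
    intro i hi hadji
    exact hmin i hi ⟨x, hx0, fun k hk => hmem k (by omega), fun k hk => hadj k (by omega), hadji⟩
  -- the chain is induced
  have hindu : ∀ i j, i + 2 ≤ j → j ≤ m₀ → ¬ G.Adj (x i) (x j) := by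
    intro i j hij hj hadjij
    apply hmin (i + 1 + (m₀ - j)) (by omega)
    refine ⟨fun k => if k ≤ i then x k else x (k - i - 1 + j), by beta_reduce; rw [if_pos (by omega)]; exact hx0, ?_, ?_, ?_⟩
    · intro k hk
      beta_reduce
      split
      · next h => exact hmem k (by omega)
      · next h => exact hmem _ (by omega)
    · intro k hk
      beta_reduce
      rcases Nat.lt_or_ge k i with h | h
      · rw [if_pos (by omega), if_pos (by omega)]
        exact hadj k (by omega)
      · rcases Nat.eq_or_lt_of_le h with rfl | h2
        · rw [if_pos le_rfl, if_neg (by omega)]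
          have : i + 1 - i - 1 + j = j := by omega
          rw [this]
          exact hadjij
        · rw [if_neg (by omega), if_neg (by omega)]
          have : k + 1 - i - 1 + j = (k - i - 1 + j) + 1 := by omega
          rw [this]
          exact hadj _ (by omega)
    · beta_reduce
      rw [if_neg (by omega)]
      have : i + 1 + (m₀ - j) - i - 1 + j = m₀ := by omega
      rw [this]
      exact hadjs
  -- the chain is injective
  have hinja : ∀ i j, i ≤ m₀ → j ≤ m₀ → x i = x j → i = j := by
    have haux : ∀ i j, i < j → j ≤ m₀ → x i = x j → False := by
      intro i j hij hj heq
      rcases Nat.eq_or_lt_of_le hj with rfl | hj2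
      · -- j = m₀ : truncate
        apply hmin i (by omega)
        exact ⟨x, hx0, fun k hk => hmem k (by omega), fun k hk => hadj k (by omega), heq ▸ hadjs⟩
      · apply hmin (i + (m₀ - j)) (by omega)
        refine ⟨fun k => if k ≤ i then x k else x (k - i + j), by beta_reduce; rw [if_pos (by omega)]; exact hx0, ?_, ?_, ?_⟩
        · intro k hk
          beta_reduce
          split
          · next h => exact hmem k (by omega)
          · next h => exact hmem _ (by omega)
        · intro k hk
          beta_reduce
          rcases Nat.lt_or_ge k i with h | h
          · rw [if_pos (by omega), if_pos (by omega)]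
            exact hadj k (by omega)
          · rcases Nat.eq_or_lt_of_le h with rfl | h2
            · rw [if_pos le_rfl, if_neg (by omega)]
              have : i + 1 - i + j = j + 1 := by omega
              rw [this, heq]
              exact hadj j (by omega)
            · rw [if_neg (by omega), if_neg (by omega)]
              have : k + 1 - i + j = (k - i + j) + 1 := by omega
              rw [this]
              exact hadj _ (by omega)
        · beta_reduce
          rw [if_neg (by omega)]
          have : i + (m₀ - j) - i + j = m₀ := by omega
          rw [this]
          exact hadjs
    intro i j hi hj heq
    rcases Nat.lt_trichotomy i j with h | h | h
    · exact absurd heq (fun he => haux i j h hj he)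
    · exact h
    · exact absurd heq.symm (fun he => haux j i h hi he)
  have hfin : ∀ t ∈ nbhdSet G C, G.Adj c t → G.Adj (x m₀) t := by
    intro t htS htc
    have ht0 : G.Adj t (x 0) := by rw [hx0]; exact htc.symm
    set jt := Nat.findGreatest (fun j => G.Adj t (x j)) m₀ with hjt
    have hjtspec : G.Adj t (x jt) := by
      rw [hjt]
      simpa using Nat.findGreatest_spec (P := fun j => G.Adj t (x j)) (Nat.zero_le m₀) ht0
    have hjtle : jt ≤ m₀ := by
      rw [hjt]; exact Nat.findGreatest_le m₀
    have hjtmax : ∀ k, jt < k → k ≤ m₀ → ¬ G.Adj t (x k) := by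
      intro k hk1 hk2
      have := Nat.findGreatest_is_greatest (P := fun j => G.Adj t (x j)) (n := m₀) (by rw [hjt] at hk1; exact hk1) hk2
      simpa using this
    by_cases hjm : jt = m₀
    · rw [hjm] at hjtspec
      exact hjtspec.symm
    · exfalso
      have hts : t ≠ s := by
        intro h
        rw [h] at htc
        exact hcs htc
      have htadjs : G.Adj t s := hScl htS ⟨hsC, u, hu, hus⟩ hts
      refine chordal_fan hch (fun k => x (jt + k)) t s (m := m₀ - jt) (by omega) ?_ ?_ ?_ ?_ htadjs ?_ ?_ ?_ ?_ ?_ ?_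
      · intro i hi
        beta_reduce
        have : jt + (i + 1) = (jt + i) + 1 := by omega
        rw [this]
        exact hadj _ (by omega)
      · intro i j hij hj
        exact hindu (jt + i) (jt + j) (by omega) (by omega)
      · intro i j hi hj heq
        have := hinja (jt + i) (jt + j) (by omega) (by omega) heq
        omega
      · simpa using hjtspec
      · intro i hi1 hi2
        exact hjtmax (jt + i) (by omega) (by omega)
      · beta_reduce
        have : jt + (m₀ - jt) = m₀ := by omega
        rw [this]
        exact hadjs
      · intro i hi
        intro h
        exact hnos (jt + i) (by omega) h.symm
      · intro i hi h
        exact htS.1 (h ▸ hmem (jt + i) (by omega))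
      · intro i hi h
        exact hsC (h ▸ hmem (jt + i) (by omega))
      · exact fun h => hts h.symm
  exact ⟨x m₀, hmem m₀ le_rfl, hadjs, hfin⟩

lemma claim1 (hch : IsChordal G) (hcomb : ¬ HasStrictCombOfCliques G) {C : Set V}
    (hne : C.Nonempty)
    (hconn : ∀ a ∈ C, ∀ b ∈ C, Relation.ReflTransGen (Rel G C) a b)
    (hScl : G.IsClique (nbhdSet G C)) :
    ∃ c ∈ C, ∀ s ∈ nbhdSet G C, G.Adj c s := by
  classical
  by_contra hfull
  push_neg at hfull
  obtain ⟨c0, hc0⟩ := hne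
  -- choice of a missed boundary vertex
  have hbad : ∀ c, ∃ s, c ∈ C → (s ∈ nbhdSet G C ∧ ¬ G.Adj c s) := by
    intro c
    by_cases h : c ∈ C
    · obtain ⟨s, hs1, hs2⟩ := hfull c h
      exact ⟨s, fun _ => ⟨hs1, hs2⟩⟩
    · exact ⟨c0, fun h' => absurd h' h⟩
  set bad : V → V := fun c => (hbad c).choose with hbaddef
  have hbadspec : ∀ c, c ∈ C → (bad c ∈ nbhdSet G C ∧ ¬ G.Adj c (bad c)) :=
    fun c hc => (hbad c).choose_spec hc
  -- the step
  have hstep : ∀ c, ∃ c', c ∈ C → (c' ∈ C ∧ G.Adj c' (bad c) ∧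
      ∀ t ∈ nbhdSet G C, G.Adj c t → G.Adj c' t) := by
    intro c
    by_cases h : c ∈ C
    · obtain ⟨c', h1, h2, h3⟩ := trace_extend hch hconn hScl h (hbadspec c h).1 (hbadspec c h).2
      exact ⟨c', fun _ => ⟨h1, h2, h3⟩⟩
    · exact ⟨c0, fun h' => absurd h' h⟩
  set nxt : V → V := fun c => (hstep c).choose with hnxtdef
  have hnxtspec : ∀ c, c ∈ C → ((nxt c) ∈ C ∧ G.Adj (nxt c) (bad c) ∧
      ∀ t ∈ nbhdSet G C, G.Adj c t → G.Adj (nxt c) t) :=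
    fun c hc => (hstep c).choose_spec hc
  set seq : ℕ → V := fun n => Nat.rec c0 (fun _ p => nxt p) n with hseqdef
  have hseqsucc : ∀ n, seq (n + 1) = nxt (seq n) := fun n => rfl
  have hseqC : ∀ n, seq n ∈ C := by
    intro n
    induction n with
    | zero => exact hc0
    | succ k ih => rw [hseqsucc]; exact (hnxtspec _ ih).1
  set y : ℕ → V := fun n => bad (seq n) with hydef
  have hyS : ∀ n, y n ∈ nbhdSet G C := fun n => (hbadspec _ (hseqC n)).1
  have hynadj : ∀ n, ¬ G.Adj (seq n) (y n) := fun n => (hbadspec _ (hseqC n)).2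
  have hmono : ∀ n, ∀ t ∈ nbhdSet G C, G.Adj (seq n) t → G.Adj (seq (n + 1)) t := by
    intro n t ht hadj
    rw [hseqsucc]
    exact (hnxtspec _ (hseqC n)).2.2 t ht hadj
  have hmonole : ∀ i j, i ≤ j → ∀ t ∈ nbhdSet G C, G.Adj (seq i) t → G.Adj (seq j) t := by
    intro i j hij
    induction j with
    | zero => intro t ht h; have : i = 0 := by omega
              rw [← this]; exact h
    | succ k ih =>
        intro t ht h
        rcases Nat.eq_or_lt_of_le hij with rfl | h2
        · exact h
        · exact hmono k t ht (ih (by omega) t ht h)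
  have hgrow : ∀ n, G.Adj (seq (n + 1)) (y n) := by
    intro n
    rw [hseqsucc]
    exact (hnxtspec _ (hseqC n)).2.1
  have hilow : ∀ i j, j < i → G.Adj (seq i) (y j) := by
    intro i j hji
    exact hmonole (j + 1) i (by omega) _ (hyS j) (hgrow j)
  have hyinj : Function.Injective y := by
    intro i j hij
    by_contra hne'
    rcases Nat.lt_or_ge i j with h | h
    · exact hynadj j (hij ▸ hilow j i h)
    · have h2 : j < i := by omega
      exact hynadj i (hij ▸ hilow i j h2)
  apply hcomb
  refine ⟨y, hyinj, ?_, ?_⟩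
  · intro i j hij
    exact hScl (hyS i) (hyS j) (fun h => hij (hyinj h))
  · intro i hi
    refine ⟨seq i, ?_, ?_⟩
    · intro j hj
      exact hilow i j hj
    · intro j hj hadj
      have : G.Adj (seq j) (y j) := hmonole i j hj _ (hyS j) hadj
      exact hynadj j this

end Claim1

section Construction

lemma IsComp.connC {X C : Set V} (h : IsComp (G := G) X C) :
    ∀ a ∈ C, ∀ b ∈ C, Relation.ReflTransGen (Rel G C) a b := by
  obtain ⟨v, hv, rfl⟩ := h
  have key : ∀ w, w ∈ CompOf G v X → Relation.ReflTransGen (Rel G (CompOf G v X)) v w := by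
    intro w hw
    obtain ⟨hwX, hr⟩ := hw
    clear hwX
    induction hr with
    | refl => exact Relation.ReflTransGen.refl
    | @tail b c hab hbc ih =>
        have hbC : b ∈ CompOf G v X := ⟨hbc.2.1, hab⟩
        have hcC : c ∈ CompOf G v X := ⟨hbc.2.2, hab.tail hbc⟩
        exact ih.tail ⟨hbc.1, hbC, hcC⟩
  intro a ha b hb
  haveI : Std.Symm (Rel G (CompOf G v X)) := ⟨fun a b h => rel_symm G _ h⟩
  exact (Std.Symm.symm (r := Relation.ReflTransGen (Rel G (CompOf G v X))) _ _ (key a ha)).trans (key b hb)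

variable (G)

def GoodBag (C R : Set V) : Prop :=
  Maximal G.IsClique R ∧ nbhdSet G C ⊆ R ∧ (R ∩ C).Nonempty

variable {G}

lemma exists_goodBag (hch : IsChordal G) (hcomb : ¬ HasStrictCombOfCliques G)
    {C : Set V} (hne : C.Nonempty)
    (hconn : ∀ a ∈ C, ∀ b ∈ C, Relation.ReflTransGen (Rel G C) a b)
    (hScl : G.IsClique (nbhdSet G C)) :
    ∃ R, GoodBag G C R := by
  obtain ⟨c, hcC, hcS⟩ := claim1 hch hcomb hne hconn hScl
  have hcnot : c ∉ nbhdSet G C := fun h => h.1 hcC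
  have hclique : G.IsClique (insert c (nbhdSet G C)) := by
    intro a ha b hb hab
    rcases Set.mem_insert_iff.mp ha with rfl | ha'
    · rcases Set.mem_insert_iff.mp hb with rfl | hb'
      · exact absurd rfl hab
      · exact hcS b hb'
    · rcases Set.mem_insert_iff.mp hb with rfl | hb'
      · exact (hcS a ha').symm
      · exact hScl ha' hb' hab
  obtain ⟨R, hsub, hmax⟩ := exists_maximal_clique _ hclique
  exact ⟨R, hmax, fun x hx => hsub (Set.mem_insert_of_mem _ hx),
    ⟨c, hsub (Set.mem_insert _ _), hcC⟩⟩

variable (G) in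
noncomputable def rootBag : Set V :=
  (exists_maximal_clique (G := G) ∅ (by simp [SimpleGraph.IsClique])).choose

lemma rootBag_max : Maximal G.IsClique (rootBag G) :=
  (exists_maximal_clique (G := G) ∅ (by simp [SimpleGraph.IsClique])).choose_spec.2

variable (G) in
open Classical in
noncomputable def bagOf (C : Set V) : Set V :=
  if h : ∃ R, GoodBag G C R then h.choose else ∅

lemma bagOf_spec {C : Set V} (h : ∃ R, GoodBag G C R) : GoodBag G C (bagOf G C) := by
  classical
  rw [bagOf]
  rw [dif_pos h]
  exact h.choose_spec

variable (G) in
noncomputable def bagAt : List (Set V) → Set V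
  | [] => rootBag G
  | C :: _ => bagOf G C

variable (G) in
noncomputable def avail : List (Set V) → Set V
  | [] => Set.univ \ rootBag G
  | C :: _ => C \ bagOf G C

variable (G) in
def Valid : List (Set V) → Prop
  | [] => True
  | C :: l => Valid l ∧ IsComp (G := G) (avail G l) C

/-- main structural invariant of the construction -/
lemma valid_good (hch : IsChordal G) (hcomb : ¬ HasStrictCombOfCliques G) :
    ∀ l : List (Set V), Valid G l →
      Maximal G.IsClique (bagAt G l) ∧
      ∀ C, IsComp (G := G) (avail G l) C →
        (nbhdSet G C ⊆ bagAt G l ∧ ∃ R, GoodBag G C R) := by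
  intro l
  induction l with
  | nil =>
      intro _
      constructor
      · exact rootBag_max
      · intro C hC
        have hnb : nbhdSet G C ⊆ bagAt G [] := by
          intro x hx
          obtain ⟨hxC, u, huC, hux⟩ := hx
          by_contra hxR
          have hxavail : x ∈ avail G [] := ⟨Set.mem_univ x, hxR⟩
          exact hxC (hC.closed huC hux hxavail)
        refine ⟨hnb, ?_⟩
        exact exists_goodBag hch hcomb hC.nonempty hC.connC
          ((rootBag_max.1).subset hnb)
  | cons C l ih =>
      rintro ⟨hvl, hcomp⟩
      obtain ⟨hmaxl, hprev⟩ := ih hvl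
      obtain ⟨hnbC, hRex⟩ := hprev C hcomp
      have hgood : GoodBag G C (bagOf G C) := bagOf_spec hRex
      constructor
      · exact hgood.1
      · intro C' hC'
        have hnb : nbhdSet G C' ⊆ bagAt G (C :: l) := by
          intro x hx
          obtain ⟨hxC, u, huC, hux⟩ := hx
          have huav : u ∈ avail G (C :: l) := hC'.subset huC
          by_contra hxR
          have hxavail : x ∈ avail G (C :: l) := by
            refine ⟨?_, hxR⟩
            by_cases hxinC : x ∈ C
            · exact hxinC
            · exfalso
              have : x ∈ nbhdSet G C := ⟨hxinC, u, huav.1, hux⟩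
              exact hxR (hgood.2.1 this)
          exact hxC (hC'.closed huC hux hxavail)
        refine ⟨hnb, ?_⟩
        exact exists_goodBag hch hcomb hC'.nonempty hC'.connC ((hgood.1.1).subset hnb)

end Construction

section Coverage

variable (G) in
noncomputable def branch (v : V) : ℕ → List (Set V)
  | 0 => []
  | k + 1 => CompOf G v (avail G (branch v k)) :: branch v k

theorem covered (hch : IsChordal G) (hcomb : ¬ HasStrictCombOfCliques G) (v : V) :
    ∃ k, v ∈ bagAt G (branch G v k) := by
  by_contra hunc
  push_neg at hunc
  classical
  set Ck : ℕ → Set V := fun k => CompOf G v (avail G (branch G v k)) with hCkdef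
  have hbr : ∀ k, branch G v (k + 1) = Ck k :: branch G v k := fun k => rfl
  have hvav : ∀ k, v ∈ avail G (branch G v k) := by
    intro k
    induction k with
    | zero => exact ⟨Set.mem_univ v, hunc 0⟩
    | succ k ih =>
        rw [hbr]
        refine ⟨mem_compOf_self ih, ?_⟩
        have h2 := hunc (k + 1)
        rw [hbr] at h2
        exact h2
  have hvC : ∀ k, v ∈ Ck k := fun k => mem_compOf_self (hvav k)
  have hvalid : ∀ k, Valid G (branch G v k) := by
    intro k
    induction k with
    | zero => trivial
    | succ k ih => exact ⟨ih, v, hvav k, rfl⟩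
  have hcompk : ∀ k, IsComp (G := G) (avail G (branch G v k)) (Ck k) :=
    fun k => ⟨v, hvav k, rfl⟩
  set S : ℕ → Set V := fun k => nbhdSet G (Ck k) with hSdef
  set R : ℕ → Set V := fun k => bagOf G (Ck k) with hRdef
  have hgood : ∀ k, GoodBag G (Ck k) (R k) := fun k =>
    bagOf_spec ((valid_good hch hcomb _ (hvalid k)).2 (Ck k) (hcompk k)).2
  have hRmax : ∀ k, Maximal G.IsClique (R k) := fun k => (hgood k).1
  have hSR : ∀ k, S k ⊆ R k := fun k => (hgood k).2.1
  have hRC : ∀ k, (R k ∩ Ck k).Nonempty := fun k => (hgood k).2.2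
  have havail : ∀ k, avail G (branch G v (k + 1)) = Ck k \ R k := fun k => rfl
  have hCk1 : ∀ k, Ck (k + 1) ⊆ Ck k \ R k := by
    intro k
    have h2 := (hcompk (k + 1)).subset
    rw [havail] at h2
    exact h2
  have hCmono : ∀ k m, k ≤ m → Ck m ⊆ Ck k := by
    intro k m hkm
    induction m, hkm using Nat.le_induction with
    | base => exact subset_rfl
    | succ m hm ih => exact fun x hx => ih ((hCk1 m hx).1)
  -- deaths at every step
  have hdeath : ∀ k, ∃ x, x ∈ R k ∧ ∀ m, k < m → x ∉ Ck m ∧ x ∉ S m := by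
    intro k
    obtain ⟨c', hc'C, hc'S⟩ := claim1 hch hcomb (hcompk (k + 1)).nonempty
      (hcompk (k + 1)).connC ((hRmax (k + 1)).1.subset (hSR (k + 1)))
    have hc'notR : c' ∉ R k := fun h => (hCk1 k hc'C).2 h
    have hex : ∃ x ∈ R k, x ≠ c' ∧ ¬ G.Adj x c' := by
      by_contra hno
      push_neg at hno
      have hclique : G.IsClique (insert c' (R k)) := by
        intro a ha b hb hab
        rcases Set.mem_insert_iff.mp ha with rfl | ha'
        · rcases Set.mem_insert_iff.mp hb with rfl | hb'
          · exact absurd rfl hab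
          · exact (hno b hb' (fun he => hab he.symm)).symm
        · rcases Set.mem_insert_iff.mp hb with rfl | hb'
          · exact hno a ha' hab
          · exact (hRmax k).1 ha' hb' hab
      have h3 := (hRmax k).2 hclique (Set.subset_insert _ _)
      exact hc'notR (h3 (Set.mem_insert _ _))
    obtain ⟨x, hxR, hxne, hxnadj⟩ := hex
    have hxnotS1 : x ∉ S (k + 1) := fun hxS => hxnadj ((hc'S x hxS).symm)
    have hxnotC1 : x ∉ Ck (k + 1) := fun h => (hCk1 k h).2 hxR
    refine ⟨x, hxR, ?_⟩
    intro m hm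
    have hsub : Ck m ⊆ Ck (k + 1) := hCmono (k + 1) m (by omega)
    constructor
    · exact fun h => hxnotC1 (hsub h)
    · rintro ⟨hxnC, u, huC, hux⟩
      exact hxnotS1 ⟨hxnotC1, u, hsub huC, hux⟩
  -- gates
  set Z : Set V := {u | ∀ k, u ∈ Ck k} with hZdef
  set W : Set V := CompOf G v Z with hWdef
  have hvZ : v ∈ Z := fun k => hvC k
  have hvW : v ∈ W := mem_compOf_self hvZ
  have hWZ : W ⊆ Z := compOf_subset
  set Γ : Set V := nbhdSet G W with hΓdef
  have hgateCS : ∀ γ ∈ Γ, ∀ m, γ ∈ Ck m ∨ γ ∈ S m := by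
    intro γ hγ m
    obtain ⟨hγW, w, hwW, hwγ⟩ := hγ
    by_cases h : γ ∈ Ck m
    · exact Or.inl h
    · exact Or.inr ⟨h, w, hWZ hwW m, hwγ⟩
  have hgate_notZ : ∀ γ ∈ Γ, γ ∉ Z := by
    intro γ hγ hγZ
    obtain ⟨hγW, w, hwW, hwγ⟩ := hγ
    exact hγW (compOf_closed hwW hwγ hγZ)
  have hentry : ∀ γ ∈ Γ, ∃ e, γ ∈ S e ∧ ∀ m, m < e → γ ∈ Ck m := by
    intro γ hγ
    have hex : ∃ k, γ ∈ S k := by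
      have h2 := hgate_notZ γ hγ
      simp only [hZdef, Set.mem_setOf_eq] at h2
      push_neg at h2
      obtain ⟨k, hk⟩ := h2
      rcases hgateCS γ hγ k with h | h
      · exact absurd h hk
      · exact ⟨k, h⟩
    refine ⟨Nat.find hex, Nat.find_spec hex, fun m hm => ?_⟩
    rcases hgateCS γ hγ m with h | h
    · exact h
    · exact absurd h (Nat.find_min hex hm)
  have hpersist : ∀ γ ∈ Γ, ∀ e m, γ ∈ S e → e ≤ m → γ ∈ S m := by
    intro γ hγ e m hSe hem
    induction m, hem using Nat.le_induction with
    | base => exact hSe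
    | succ m hm ih =>
        obtain ⟨hγW, w, hwW, hwγ⟩ := hγ
        exact ⟨fun h => ih.1 ((hCk1 m h).1), w, hWZ hwW (m + 1), hwγ⟩
  by_cases hcase : ∃ T, ∀ γ ∈ Γ, γ ∉ Ck T
  · obtain ⟨T, hT⟩ := hcase
    obtain ⟨r, hrR, hrC⟩ := hRC T
    have hreach : ∀ b, Relation.ReflTransGen (Rel G (Ck T)) v b → b ∈ W := by
      intro b hb
      induction hb with
      | refl => exact hvW
      | @tail b c hab hbc ih =>
          by_cases h : c ∈ W
          · exact h
          · exact absurd hbc.2.2 (fun h2 => hT c ⟨h, b, ih, hbc.1⟩ h2)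
    have hrW : r ∈ W := hreach r ((hcompk T).connC v (hvC T) r hrC)
    exact (hCk1 T (hWZ hrW (T + 1))).2 hrR
  · push_neg at hcase
    have hgate : ∀ T, ∃ p : V × ℕ, p.1 ∈ Γ ∧ p.1 ∈ S p.2 ∧ (∀ m, m < p.2 → p.1 ∈ Ck m)
        ∧ T < p.2 := by
      intro T
      obtain ⟨γ, hγ, hγC⟩ := hcase T
      obtain ⟨e, he1, he2⟩ := hentry γ hγ
      refine ⟨(γ, e), hγ, he1, he2, ?_⟩
      by_contra h
      push_neg at h
      exact (hpersist γ hγ e T he1 h).1 hγC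
    set gseq : ℕ → V × ℕ := fun n =>
      Nat.rec (hgate 0).choose (fun _ p => (hgate (p.2 + 1)).choose) n with hgseq
    set gam : ℕ → V := fun n => (gseq n).1 with hgam
    set E : ℕ → ℕ := fun n => (gseq n).2 with hE
    have hspec0 : gam 0 ∈ Γ ∧ gam 0 ∈ S (E 0) ∧ (∀ m, m < E 0 → gam 0 ∈ Ck m) := by
      obtain ⟨h1, h2, h3, _⟩ := (hgate 0).choose_spec
      exact ⟨h1, h2, h3⟩
    have hspecS : ∀ n, gam (n + 1) ∈ Γ ∧ gam (n + 1) ∈ S (E (n + 1)) ∧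
        (∀ m, m < E (n + 1) → gam (n + 1) ∈ Ck m) ∧ E n + 1 < E (n + 1) := by
      intro n
      exact (hgate ((gseq n).2 + 1)).choose_spec
    have hγΓ : ∀ n, gam n ∈ Γ := by
      intro n
      cases n with
      | zero => exact hspec0.1
      | succ n => exact (hspecS n).1
    have hγS : ∀ n, gam n ∈ S (E n) := by
      intro n
      cases n with
      | zero => exact hspec0.2.1
      | succ n => exact (hspecS n).2.1
    have hγCk : ∀ n m, m < E n → gam n ∈ Ck m := by
      intro n
      cases n with
      | zero => exact hspec0.2.2
      | succ n => exact (hspecS n).2.2.1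
    have hEinc : ∀ n, E n + 1 < E (n + 1) := fun n => (hspecS n).2.2.2
    have hEmono : ∀ i j, i < j → E i + 1 < E j + 1 := by
      intro i j hij
      induction j with
      | zero => omega
      | succ j ih =>
          rcases Nat.lt_or_ge i j with h | h
          · have := hEinc j
            have := ih h
            omega
          · have hij' : i = j := by omega
            subst hij'
            have := hEinc i
            omega
    have hγpers : ∀ n m, E n ≤ m → gam n ∈ S m :=
      fun n m hm => hpersist (gam n) (hγΓ n) (E n) m (hγS n) hm
    -- injectivity of the spine
    have hγinj : Function.Injective gam := by
      intro i j hij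
      by_contra hne
      rcases Nat.lt_or_ge i j with h | h
      · have h1 : gam j ∈ Ck (E i) := hγCk j (E i) (by have := hEmono i j h; omega)
        have h2 : gam i ∈ S (E i) := hγS i
        rw [hij] at h2
        exact h2.1 h1
      · have h' : j < i := by omega
        have h1 : gam i ∈ Ck (E j) := hγCk i (E j) (by have := hEmono j i h'; omega)
        have h2 : gam j ∈ S (E j) := hγS j
        rw [← hij] at h2
        exact h2.1 h1
    -- pairwise adjacency of the spine
    have hγadj : ∀ i j, i ≠ j → G.Adj (gam i) (gam j) := by
      have haux : ∀ i j, i < j → G.Adj (gam i) (gam j) := by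
        intro i j hij
        have h1 : gam i ∈ R (E j) := hSR (E j) (hγpers i (E j) (by have := hEmono i j hij; omega))
        have h2 : gam j ∈ R (E j) := hSR (E j) (hγS j)
        exact (hRmax (E j)).1 h1 h2 (fun he => absurd (hγinj he) (Nat.ne_of_lt hij))
      intro i j hij
      rcases Nat.lt_or_ge i j with h | h
      · exact haux i j h
      · exact (haux j i (by omega)).symm
    -- the comb
    apply hcomb
    refine ⟨gam, hγinj, hγadj, ?_⟩
    intro i hi
    obtain ⟨x, hxR, hxdead⟩ := hdeath (E (i - 1))
    refine ⟨x, ?_, ?_⟩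
    · intro j hj
      have hjS : gam j ∈ S (E (i - 1)) := by
        apply hγpers
        rcases Nat.eq_or_lt_of_le (by omega : j ≤ i - 1) with rfl | h
        · exact le_rfl
        · have := hEmono j (i - 1) h
          omega
      have h1 : gam j ∈ R (E (i - 1)) := hSR _ hjS
      have hne : x ≠ gam j := by
        intro he
        have : gam j ∈ S (E (i - 1) + 1) := hγpers j _ (by
          rcases Nat.eq_or_lt_of_le (by omega : j ≤ i - 1) with rfl | h
          · omega
          · have := hEmono j (i - 1) h; omega)
        exact (hxdead (E (i - 1) + 1) (by omega)).2 (he ▸ this)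
      exact ((hRmax (E (i - 1))).1 hxR h1 hne)
    · intro j hj hadj
      have hjC : gam j ∈ Ck (E (i - 1) + 1) := by
        apply hγCk
        rcases Nat.eq_or_lt_of_le hj with rfl | h
        · have := hEinc (i - 1)
          have hii : i - 1 + 1 = i := by omega
          rw [hii] at this
          omega
        · have h1 := hEinc (i - 1)
          have hii : i - 1 + 1 = i := by omega
          rw [hii] at h1
          have h2 := hEmono i j h
          omega
      have hxnC : x ∉ Ck (E (i - 1) + 1) := (hxdead _ (by omega)).1
      exact (hxdead (E (i - 1) + 1) (by omega)).2 ⟨hxnC, gam j, hjC, hadj.symm⟩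

end Coverage

section TreePart

lemma goodBag_subset {C R : Set V} (h : GoodBag G C R) : R ⊆ C ∪ nbhdSet G C := by
  intro x hx
  obtain ⟨c₀, hc₀R, hc₀C⟩ := h.2.2
  by_cases hxC : x ∈ C
  · exact Or.inl hxC
  · right
    refine ⟨hxC, c₀, hc₀C, ?_⟩
    have hne : c₀ ≠ x := fun he => hxC (he ▸ hc₀C)
    exact h.1.1 hc₀R hx hne

lemma mem_avail_not_bagAt {l : List (Set V)} {v : V} (h : v ∈ avail G l) :
    v ∉ bagAt G l := by
  cases l with
  | nil => exact h.2
  | cons C l => exact h.2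

lemma avail_cons_subset {C : Set V} {l : List (Set V)} : avail G (C :: l) ⊆ C :=
  fun _ h => h.1

-- branch machinery
lemma branch_zero (v : V) : branch G v 0 = [] := rfl

lemma branch_succ (v : V) (k : ℕ) :
    branch G v (k + 1) = CompOf G v (avail G (branch G v k)) :: branch G v k := rfl

lemma branch_avail {v : V} : ∀ k : ℕ, (∀ j, j ≤ k → v ∉ bagAt G (branch G v j)) →
    v ∈ avail G (branch G v k) ∧ Valid G (branch G v k)
  | 0, h => ⟨⟨Set.mem_univ v, h 0 le_rfl⟩, trivial⟩
  | (k + 1), h => by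
      obtain ⟨hav, hval⟩ := branch_avail k (fun j hj => h j (by omega))
      constructor
      · rw [branch_succ]
        refine ⟨mem_compOf_self hav, ?_⟩
        have h2 := h (k + 1) le_rfl
        rw [branch_succ] at h2
        exact h2
      · exact ⟨hval, v, hav, rfl⟩

/-- if a valid node has `v` in its head component, that node lies on the branch of `v`. -/
lemma head_mem_branch {v : V} : ∀ (l : List (Set V)) (C : Set V),
    Valid G (C :: l) → v ∈ C →
    (C :: l = branch G v (l.length + 1) ∧ ∀ j, j ≤ l.length → v ∈ avail G (branch G v j))
  | [], C, hval, hv => by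
      have hcomp := hval.2
      have hC : C = CompOf G v (avail G []) := hcomp.eq_compOf hv
      constructor
      · simp only [List.length_nil]
        rw [branch_succ, branch_zero, ← hC]
      · intro j hj
        simp only [List.length_nil] at hj
        have hj0 : j = 0 := by omega
        subst hj0
        rw [branch_zero]
        exact hcomp.subset hv
  | (C' :: l'), C, hval, hv => by
      have hcomp := hval.2
      have hvC' : v ∈ C' := avail_cons_subset (hcomp.subset hv)
      obtain ⟨heq, hav⟩ := head_mem_branch l' C' hval.1 hvC'
      have heq2 : C :: C' :: l' = branch G v (l'.length + 2) := by
        have : C = CompOf G v (avail G (C' :: l')) := hcomp.eq_compOf hv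
        rw [branch_succ]
        rw [← heq]
        rw [← this]
      refine ⟨by simpa using heq2, ?_⟩
      intro j hj
      rcases Nat.lt_or_ge j (l'.length + 1) with h | h
      · exact hav j (by omega)
      · have hj2 : j = l'.length + 1 := by simp at hj; omega
        subst hj2
        rw [← heq]
        exact hcomp.subset hv

variable (G) in
def Node : Type u := {l : List (Set V) // Valid G l}

variable (G) in
def TreeG : SimpleGraph (Node G) where
  Adj a b := (∃ C, b.1 = C :: a.1) ∨ (∃ C, a.1 = C :: b.1)
  symm := by
    constructor
    rintro a b (⟨C, h⟩ | ⟨C, h⟩)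
    · exact Or.inr ⟨C, h⟩
    · exact Or.inl ⟨C, h⟩
  loopless := by
    constructor
    rintro a (⟨C, h⟩ | ⟨C, h⟩) <;>
    · have := congrArg List.length h
      simp at this

variable (G) in
def rootNode : Node G := ⟨[], trivial⟩

lemma treeG_adj_parent {C : Set V} {l : List (Set V)} (h : Valid G (C :: l)) :
    (TreeG G).Adj ⟨C :: l, h⟩ ⟨l, h.1⟩ :=
  Or.inr ⟨C, rfl⟩

lemma reachable_root (a : Node G) : (TreeG G).Reachable a (rootNode G) := by
  obtain ⟨l, hl⟩ := a
  induction l with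
  | nil => exact Reachable.refl _
  | cons C l ih =>
      exact ((treeG_adj_parent hl).reachable).trans (ih hl.1)

lemma treeG_connected : (TreeG G).Connected := by
  rw [connected_iff]
  refine ⟨fun a b => (reachable_root a).trans (reachable_root b).symm, ⟨rootNode G⟩⟩

lemma treeG_depth {a b : Node G} (h : (TreeG G).Adj a b) :
    (b.1.length = a.1.length + 1 ∧ b.1.tail = a.1) ∨
    (a.1.length = b.1.length + 1 ∧ a.1.tail = b.1) := by
  rcases h with ⟨C, h⟩ | ⟨C, h⟩
  · left; rw [h]; exact ⟨by simp, rfl⟩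
  · right; rw [h]; exact ⟨by simp, rfl⟩

lemma treeG_acyclic : (TreeG G).IsAcyclic := by
  intro u c hc
  have hn3 : 3 ≤ c.length := hc.three_le_length
  -- support is the list of getVerts
  have hsup : ∀ {a b : Node G} (p : (TreeG G).Walk a b),
      p.support = (List.range (p.length + 1)).map p.getVert := by
    intro a b p
    induction p with
    | nil => simp [SimpleGraph.Walk.getVert]
    | @cons a b' c' h p ih =>
        rw [SimpleGraph.Walk.support_cons, ih]
        have hr : List.range ((SimpleGraph.Walk.cons h p).length + 1) =
            0 :: List.map Nat.succ (List.range (p.length + 1)) := by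
          rw [SimpleGraph.Walk.length_cons]
          exact List.range_succ_eq_map
        rw [hr, List.map_cons, List.map_map]
        congr 1
  -- injectivity of getVert on [1, n]
  have hinj : ∀ i j, 1 ≤ i → i ≤ c.length → 1 ≤ j → j ≤ c.length →
      c.getVert i = c.getVert j → i = j := by
    intro i j hi1 hi2 hj1 hj2 hij
    have hnds : c.support.tail.Nodup := hc.2
    rw [hsup c] at hnds
    rw [List.range_succ_eq_map] at hnds
    simp only [List.map_cons, List.tail_cons, List.map_map] at hnds
    have := List.inj_on_of_nodup_map hnds (x := i - 1) (y := j - 1) ?_ ?_ ?_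
    · omega
    · rw [List.mem_range]; omega
    · rw [List.mem_range]; omega
    · simp only [Function.comp_apply, Nat.succ_eq_add_one]
      have e1 : i - 1 + 1 = i := by omega
      have e2 : j - 1 + 1 = j := by omega
      rw [e1, e2]
      exact hij
  -- adjacency: smaller one is the tail of the other and depths differ by one
  have hstep : ∀ {a b : Node G}, (TreeG G).Adj a b → b.1.length ≤ a.1.length →
      (b.1.length + 1 = a.1.length ∧ a.1.tail = b.1) := by
    intro a b hab hle
    rcases treeG_depth hab with ⟨h1, h2⟩ | ⟨h1, h2⟩
    · omega
    · exact ⟨h1.symm, h2⟩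
  -- pick an index of maximal depth among [1, n]
  have hne : (Finset.Icc 1 c.length).Nonempty := ⟨1, by simp; omega⟩
  obtain ⟨i₀, hi₀mem, hi₀max⟩ := Finset.exists_max_image (Finset.Icc 1 c.length)
    (fun i => (c.getVert i).1.length) hne
  rw [Finset.mem_Icc] at hi₀mem
  have hmax : ∀ i, i ≤ c.length → (c.getVert i).1.length ≤ (c.getVert i₀).1.length := by
    intro i hi
    rcases Nat.eq_zero_or_pos i with rfl | hpos
    · have h0 : c.getVert 0 = c.getVert c.length := by
        rw [SimpleGraph.Walk.getVert_zero, SimpleGraph.Walk.getVert_length]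
      rw [h0]
      exact hi₀max c.length (Finset.mem_Icc.mpr ⟨by omega, le_rfl⟩)
    · exact hi₀max i (Finset.mem_Icc.mpr ⟨hpos, hi⟩)
  -- the two cycle-neighbours of the max-depth vertex
  rcases Nat.lt_or_ge i₀ c.length with hlt | hge
  · -- neighbours i₀ - 1 and i₀ + 1
    have hadj1 : (TreeG G).Adj (c.getVert (i₀ - 1)) (c.getVert i₀) := by
      have := c.adj_getVert_succ (i := i₀ - 1) (by omega)
      have e : i₀ - 1 + 1 = i₀ := by omega
      rwa [e] at this
    have hadj2 : (TreeG G).Adj (c.getVert (i₀ + 1)) (c.getVert i₀) :=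
      (c.adj_getVert_succ (i := i₀) (by omega)).symm
    obtain ⟨hd1, ht1⟩ := hstep hadj1.symm (hmax (i₀ - 1) (by omega))
    obtain ⟨hd2, ht2⟩ := hstep hadj2.symm (hmax (i₀ + 1) (by omega))
    have heq : c.getVert (i₀ - 1) = c.getVert (i₀ + 1) := by
      apply Subtype.ext
      rw [← ht1, ← ht2]
    rcases Nat.eq_zero_or_pos (i₀ - 1) with h0 | hpos
    · -- i₀ = 1 : getVert 0 = getVert n forces i₀ + 1 = n
      have h1 : c.getVert 0 = c.getVert c.length := by
        rw [SimpleGraph.Walk.getVert_zero, SimpleGraph.Walk.getVert_length]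
      rw [h0, h1] at heq
      have := hinj c.length (i₀ + 1) (by omega) le_rfl (by omega) (by omega) heq
      omega
    · have := hinj (i₀ - 1) (i₀ + 1) (by omega) (by omega) (by omega) (by omega) heq
      omega
  · -- i₀ = n : neighbours n - 1 and 1
    have hi₀n : i₀ = c.length := by omega
    subst hi₀n
    have hadj1 : (TreeG G).Adj (c.getVert (c.length - 1)) (c.getVert c.length) := by
      have := c.adj_getVert_succ (i := c.length - 1) (by omega)
      have e : c.length - 1 + 1 = c.length := by omega
      rwa [e] at this
    have hadj2 : (TreeG G).Adj (c.getVert 1) (c.getVert c.length) := by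
      have h1 : c.getVert 0 = c.getVert c.length := by
        rw [SimpleGraph.Walk.getVert_zero, SimpleGraph.Walk.getVert_length]
      have := c.adj_getVert_succ (i := 0) (by omega)
      rw [h1] at this
      simpa using this.symm
    obtain ⟨hd1, ht1⟩ := hstep hadj1.symm (hmax (c.length - 1) (by omega))
    obtain ⟨hd2, ht2⟩ := hstep hadj2.symm (hmax 1 (by omega))
    have heq : c.getVert (c.length - 1) = c.getVert 1 := by
      apply Subtype.ext
      rw [← ht1, ← ht2]
    have := hinj (c.length - 1) 1 (by omega) (by omega) (by omega) (by omega) heq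
    omega

lemma treeG_isTree : (TreeG G).IsTree :=
  ⟨treeG_connected, treeG_acyclic⟩

end TreePart

section Final

lemma branch_valid_at (hch : IsChordal G) (hcomb : ¬ HasStrictCombOfCliques G) (v : V) :
    ∀ k, (∀ j, j < k → v ∉ bagAt G (branch G v j)) → Valid G (branch G v k) := by
  intro k hk
  cases k with
  | zero => trivial
  | succ k =>
      obtain ⟨hav, hval⟩ := branch_avail (v := v) k (fun j hj => hk j (by omega))
      exact ⟨hval, v, hav, rfl⟩

lemma occ_connected (hch : IsChordal G) (hcomb : ¬ HasStrictCombOfCliques G) (v : V) :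
    ((TreeG G).induce {t : Node G | v ∈ bagAt G t.1}).Connected := by
  classical
  set O : Set (Node G) := {t : Node G | v ∈ bagAt G t.1} with hO
  obtain ⟨k₀, hk₀, hmin⟩ : ∃ k, v ∈ bagAt G (branch G v k) ∧
      ∀ j, j < k → v ∉ bagAt G (branch G v j) := by
    have hex := covered hch hcomb v
    exact ⟨Nat.find hex, Nat.find_spec hex, fun j hj => Nat.find_min hex hj⟩
  have hvalk₀ : Valid G (branch G v k₀) := branch_valid_at hch hcomb v k₀ hmin
  have hcovO : (⟨branch G v k₀, hvalk₀⟩ : Node G) ∈ O := hk₀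
  have hreach : ∀ (l : List (Set V)) (hl : Valid G l) (hv : v ∈ bagAt G l),
      ((TreeG G).induce O).Reachable ⟨⟨l, hl⟩, hv⟩ ⟨⟨branch G v k₀, hvalk₀⟩, hcovO⟩ := by
    intro l
    induction l with
    | nil =>
        intro hl hv
        have h0 : k₀ = 0 := by
          by_contra h
          exact hmin 0 (by omega) hv
        have heq2 : (⟨⟨[], hl⟩, hv⟩ : O) = ⟨⟨branch G v k₀, hvalk₀⟩, hcovO⟩ := by
          apply Subtype.ext
          apply Subtype.ext
          show ([] : List (Set V)) = branch G v k₀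
          rw [h0]
          rfl
        rw [heq2]
    | cons C l ih =>
        intro hl hv
        by_cases hvC : v ∈ C
        · obtain ⟨heq, hav⟩ := head_mem_branch l C hl hvC
          have hbag : v ∈ bagAt G (branch G v (l.length + 1)) := by rw [← heq]; exact hv
          have hkeq : k₀ = l.length + 1 := by
            rcases Nat.lt_trichotomy k₀ (l.length + 1) with h | h | h
            · exact absurd hk₀ (mem_avail_not_bagAt (hav k₀ (by omega)))
            · exact h
            · exact absurd hbag (hmin _ h)
          have heq2 : (⟨⟨C :: l, hl⟩, hv⟩ : O) = ⟨⟨branch G v k₀, hvalk₀⟩, hcovO⟩ := by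
            apply Subtype.ext
            apply Subtype.ext
            show C :: l = branch G v k₀
            rw [hkeq]
            exact heq
          rw [heq2]
        · have hgood : GoodBag G C (bagOf G C) :=
            bagOf_spec ((valid_good hch hcomb l hl.1).2 C hl.2).2
          have hvS : v ∈ nbhdSet G C := by
            rcases goodBag_subset hgood hv with h | h
            · exact absurd h hvC
            · exact h
          have hvparent : v ∈ bagAt G l := ((valid_good hch hcomb l hl.1).2 C hl.2).1 hvS
          have hadj : ((TreeG G).induce O).Adj ⟨⟨C :: l, hl⟩, hv⟩ ⟨⟨l, hl.1⟩, hvparent⟩ := by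
            show (TreeG G).Adj ⟨C :: l, hl⟩ ⟨l, hl.1⟩
            exact Or.inr ⟨C, rfl⟩
          exact hadj.reachable.trans (ih hl.1 hvparent)
  rw [connected_iff]
  constructor
  · rintro ⟨⟨l₁, hl₁⟩, hv₁⟩ ⟨⟨l₂, hl₂⟩, hv₂⟩
    exact (hreach l₁ hl₁ hv₁).trans (hreach l₂ hl₂ hv₂).symm
  · exact ⟨⟨⟨branch G v k₀, hvalk₀⟩, hcovO⟩⟩

lemma avail_branch_mono (v : V) : ∀ j k, j ≤ k →
    avail G (branch G v k) ⊆ avail G (branch G v j) := by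
  intro j k hjk
  induction k, hjk using Nat.le_induction with
  | base => exact subset_rfl
  | succ k hk ih =>
      refine subset_trans ?_ ih
      rw [branch_succ]
      exact fun x hx => compOf_subset hx.1

lemma edge_cov (hch : IsChordal G) (hcomb : ¬ HasStrictCombOfCliques G)
    {u v : V} (huv : G.Adj u v) :
    ∃ (l : List (Set V)) (_ : Valid G l), u ∈ bagAt G l ∧ v ∈ bagAt G l := by
  classical
  have key : ∀ a b : V, G.Adj a b →
      Nat.find (covered hch hcomb a) ≤ Nat.find (covered hch hcomb b) →
      ∃ (l : List (Set V)) (_ : Valid G l), a ∈ bagAt G l ∧ b ∈ bagAt G l := by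
    intro a b hab hle
    set ka := Nat.find (covered hch hcomb a) with hka
    set kb := Nat.find (covered hch hcomb b) with hkb
    have hspa : a ∈ bagAt G (branch G a ka) := Nat.find_spec (covered hch hcomb a)
    have hspb : b ∈ bagAt G (branch G b kb) := Nat.find_spec (covered hch hcomb b)
    have hmina : ∀ j, j < ka → a ∉ bagAt G (branch G a j) :=
      fun j hj => Nat.find_min (covered hch hcomb a) hj
    have hminb : ∀ j, j < kb → b ∉ bagAt G (branch G b j) :=
      fun j hj => Nat.find_min (covered hch hcomb b) hj
    -- the branches agree up to ka
    have hagree : ∀ k, k ≤ ka → k ≤ kb → branch G a k = branch G b k := by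
      intro k
      induction k with
      | zero => intro _ _; rfl
      | succ k ih =>
          intro h1 h2
          have heq := ih (by omega) (by omega)
          have hauav : a ∈ avail G (branch G a k) :=
            (branch_avail k (fun j hj => hmina j (by omega))).1
          have hbvav : b ∈ avail G (branch G b k) :=
            (branch_avail k (fun j hj => hminb j (by omega))).1
          rw [← heq] at hbvav
          rw [branch_succ, branch_succ, heq]
          congr 1
          rw [← heq]
          have hbmem : b ∈ CompOf G a (avail G (branch G a k)) :=
            compOf_closed (mem_compOf_self hauav) hab hbvav
          exact (compOf_eq_of_mem hbmem).symm
    rcases Nat.eq_or_lt_of_le hle with heq | hlt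
    · -- covered at the same level, same node
      have hbr := hagree ka le_rfl (by omega)
      refine ⟨branch G a ka, branch_valid_at hch hcomb a ka hmina, hspa, ?_⟩
      rw [hbr, heq]
      exact hspb
    · -- a covered strictly earlier
      have hkb1 : 1 ≤ kb := by omega
      set C := CompOf G b (avail G (branch G b (kb - 1))) with hC
      have hbrkb : branch G b kb = C :: branch G b (kb - 1) := by
        have h5 : kb = (kb - 1) + 1 := by omega
        conv_lhs => rw [h5]
        rw [branch_succ, hC]
      have hbav : b ∈ avail G (branch G b (kb - 1)) :=
        (branch_avail (kb - 1) (fun j hj => hminb j (by omega))).1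
      have hbC : b ∈ C := mem_compOf_self hbav
      have hvalb : Valid G (branch G b (kb - 1)) := branch_valid_at hch hcomb b (kb - 1)
        (fun j hj => hminb j (by omega))
      have hcomp : IsComp (G := G) (avail G (branch G b (kb - 1))) C := ⟨b, hbav, rfl⟩
      -- u is not in C
      have hanotC : a ∉ C := by
        intro haC
        have h1 : C ⊆ avail G (branch G b (kb - 1)) := hcomp.subset
        have h2 : avail G (branch G b (kb - 1)) ⊆ avail G (branch G b ka) :=
          avail_branch_mono b ka (kb - 1) (by omega)
        have h3 : branch G b ka = branch G a ka := (hagree ka le_rfl (by omega)).symm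
        have h4 : a ∈ avail G (branch G a ka) := by
          rw [← h3]
          exact h2 (h1 haC)
        exact mem_avail_not_bagAt h4 hspa
      have haS : a ∈ nbhdSet G C := ⟨hanotC, b, hbC, hab.symm⟩
      have hgood : GoodBag G C (bagOf G C) :=
        bagOf_spec ((valid_good hch hcomb _ hvalb).2 C hcomp).2
      refine ⟨branch G b kb, branch_valid_at hch hcomb b kb hminb, ?_, hspb⟩
      rw [hbrkb]
      show a ∈ bagOf G C
      exact hgood.2.1 haS
  rcases le_total (Nat.find (covered hch hcomb u)) (Nat.find (covered hch hcomb v)) with h | h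
  · exact key u v huv h
  · obtain ⟨l, hl, h1, h2⟩ := key v u huv.symm h
    exact ⟨l, hl, h2, h1⟩

end Final

end Stmt4

theorem stmt4 {V : Type u} (G : SimpleGraph V) (hchordal : IsChordal G)
    (hcomb : ¬ HasStrictCombOfCliques G) :
    ∃ (ι : Type u) (T : SimpleGraph ι) (bag : ι → Set V),
      IsTreeDecomp G T bag ∧ ∀ t, Maximal G.IsClique (bag t) := by
  classical
  refine ⟨Stmt4.Node G, Stmt4.TreeG G, fun t => Stmt4.bagAt G t.1,
    ⟨Stmt4.treeG_isTree, ?_, ?_, ?_⟩, ?_⟩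
  · intro v
    exact ⟨⟨Stmt4.branch G v (Nat.find (Stmt4.covered hchordal hcomb v)),
      Stmt4.branch_valid_at hchordal hcomb v _ (fun j hj => Nat.find_min _ hj)⟩,
      Nat.find_spec (Stmt4.covered hchordal hcomb v)⟩
  · intro x y hxy
    obtain ⟨l, hl, h1, h2⟩ := Stmt4.edge_cov hchordal hcomb hxy
    exact ⟨⟨l, hl⟩, h1, h2⟩
  · intro v
    exact Stmt4.occ_connected hchordal hcomb v
  · intro t
    exact (Stmt4.valid_good hchordal hcomb t.1 t.2).1
end

section
/- Let G be a chordal graph and let A, B be disjoint connected nonempty vertex sets with no edge between A and B. Then every minimal A–B separator that is disjoint from A ∪ B is a clique. -/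
open SimpleGraph

variable {V W : Type*}

section helpers
variable {V : Type*} {G : SimpleGraph V}



private def wtake : {u v : V} → (w : G.Walk u v) → (n : ℕ) → G.Walk u (w.getVert n)
  | _, _, .nil, _ => .nil
  | _, _, .cons _ _, 0 => .nil
  | _, _, .cons h q, n+1 => .cons h (wtake q n)

private def wdrop : {u v : V} → (w : G.Walk u v) → (n : ℕ) → G.Walk (w.getVert n) v
  | _, _, .nil, _ => .nil
  | _, _, .cons h q, 0 => .cons h q
  | _, _, .cons _ q, n+1 => wdrop q n

private lemma wtake_length : ∀ {u v : V} (w : G.Walk u v) (n : ℕ), (wtake w n).length = min n w.length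
  | _, _, .nil, n => by simp [wtake]
  | _, _, .cons h q, 0 => by simp [wtake]; rfl
  | _, _, .cons h q, n+1 => by
      simp [wtake, wtake_length q n, Nat.succ_min_succ]

private lemma wdrop_length : ∀ {u v : V} (w : G.Walk u v) (n : ℕ), (wdrop w n).length = w.length - n
  | _, _, .nil, n => by simp [wdrop]
  | _, _, .cons h q, 0 => by simp [wdrop]; rfl
  | _, _, .cons h q, n+1 => by
      simp [wdrop, wdrop_length q n]

private lemma wtake_support : ∀ {u v : V} (w : G.Walk u v) (n : ℕ), ∀ x ∈ (wtake w n).support, x ∈ w.support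
  | _, _, .nil, n => by simp [wtake]
  | _, _, .cons h q, 0 => by simp [wtake]; intro x hx; exact Or.inl (List.mem_singleton.mp hx)
  | _, _, .cons h q, n+1 => by
      intro x hx
      simp only [wtake, Walk.support_cons, List.mem_cons] at hx ⊢
      rcases List.mem_cons.mp hx with h1 | h1
      · exact Or.inl h1
      · exact Or.inr (wtake_support q n x h1)

private lemma wdrop_support : ∀ {u v : V} (w : G.Walk u v) (n : ℕ), ∀ x ∈ (wdrop w n).support, x ∈ w.support
  | _, _, .nil, n => fun x hx => hx
  | _, _, .cons h q, 0 => fun x hx => hx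
  | _, _, .cons h q, n+1 => by
      intro x hx
      simp only [Walk.support_cons, List.mem_cons]
      exact Or.inr (wdrop_support q n x hx)

private lemma exists_shorter_of_chord {u v : V} (w : G.Walk u v) {a b : ℕ} (hab : a + 1 < b)
    (hb : b ≤ w.length) (hadj : G.Adj (w.getVert a) (w.getVert b)) :
    ∃ w' : G.Walk u v, w'.length < w.length ∧ ∀ x ∈ w'.support, x ∈ w.support := by
  refine ⟨(wtake w a).append (.cons hadj (wdrop w b)), ?_, ?_⟩
  · rw [Walk.length_append, Walk.length_cons, wtake_length, wdrop_length]
    omega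
  · intro x hx
    rw [Walk.mem_support_append_iff] at hx
    rcases hx with hx | hx
    · exact wtake_support w a x hx
    · rw [Walk.support_cons, List.mem_cons] at hx
      rcases hx with rfl | hx
      · exact Walk.mem_support_iff_exists_getVert.2 ⟨a, rfl, by omega⟩
      · exact wdrop_support w b x hx

private lemma getVert_inj {u v : V} {w : G.Walk u v} (hw : w.IsPath) :
    ∀ {a b : ℕ}, a ≤ w.length → b ≤ w.length → w.getVert a = w.getVert b → a = b := by
  induction w with
  | nil =>
    intro a b ha hb _
    simp only [Walk.length_nil, Nat.le_zero] at ha hb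
    omega
  | cons h q ih =>
    intro a b ha hb heq
    rw [Walk.cons_isPath_iff] at hw
    match a, b with
    | 0, 0 => rfl
    | 0, b+1 =>
      exfalso
      apply hw.2
      rw [Walk.getVert_cons_succ] at heq
      exact Walk.mem_support_iff_exists_getVert.2 ⟨b, heq.symm, by simpa [Walk.length_cons] using hb⟩
    | a+1, 0 =>
      exfalso
      apply hw.2
      rw [Walk.getVert_cons_succ] at heq
      exact Walk.mem_support_iff_exists_getVert.2 ⟨a, heq, by simpa [Walk.length_cons] using ha⟩
    | a+1, b+1 =>
      rw [Walk.getVert_cons_succ, Walk.getVert_cons_succ] at heq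
      have := ih hw.1 (by simpa [Walk.length_cons] using ha) (by simpa [Walk.length_cons] using hb) heq
      omega

/-- A minimal-length walk (within a support-predicate class) is a chord-free path. -/
private lemma exists_min_path {x y : V} (Pd : V → Prop) (w0 : G.Walk x y)
    (h0 : ∀ z ∈ w0.support, Pd z) :
    ∃ P : G.Walk x y, P.IsPath ∧ (∀ z ∈ P.support, Pd z) ∧
      ∀ a b : ℕ, a + 1 < b → b ≤ P.length → ¬ G.Adj (P.getVert a) (P.getVert b) := by
  classical
  have hQ : ∃ n : ℕ, ∃ w : G.Walk x y, (∀ z ∈ w.support, Pd z) ∧ w.length = n := ⟨_, w0, h0, rfl⟩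
  set n₀ := Nat.find hQ with hn₀def
  have hmin : ∀ m, (∃ w : G.Walk x y, (∀ z ∈ w.support, Pd z) ∧ w.length = m) → n₀ ≤ m :=
    fun m hm => Nat.find_min' hQ hm
  obtain ⟨w, hw, hwl⟩ := Nat.find_spec hQ
  have hbp : ∀ z ∈ w.bypass.support, Pd z := fun z hz => hw z (Walk.support_bypass_subset w hz)
  have hlen : w.bypass.length = n₀ := by
    have h1 : w.bypass.length ≤ n₀ := le_of_le_of_eq (Walk.length_bypass_le w) hwl
    have h2 : n₀ ≤ w.bypass.length := hmin _ ⟨w.bypass, hbp, rfl⟩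
    omega
  refine ⟨w.bypass, Walk.bypass_isPath w, hbp, ?_⟩
  intro a b hab hb hadj
  obtain ⟨w', hw'len, hw'sup⟩ := exists_shorter_of_chord w.bypass hab hb hadj
  have := hmin _ ⟨w', fun z hz => hbp z (hw'sup z hz), rfl⟩
  omega

/-- `v` can reach `X` by a walk avoiding `S`. -/
private def sideOf (G : SimpleGraph V) (S X : Set V) (v : V) : Prop :=
  ∃ a ∈ X, ∃ p : G.Walk v a, ∀ u ∈ p.support, u ∉ S

private lemma sideOf_not_mem {S X : Set V} {v : V} (h : sideOf G S X v) : v ∉ S := by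
  obtain ⟨a, ha, p, hp⟩ := h
  exact hp v p.start_mem_support

private lemma side_no_adj {A B S : Set V} (hsep : Separates G A B S) {v w : V}
    (hv : sideOf G S A v) (hw : sideOf G S B w) (hadj : G.Adj v w) : False := by
  obtain ⟨a, ha, pa, hpa⟩ := hv
  obtain ⟨b, hb, pb, hpb⟩ := hw
  obtain ⟨z, hz, hzS⟩ := hsep a ha b hb (pa.reverse.append (.cons hadj pb))
  rw [Walk.mem_support_append_iff, Walk.support_reverse, List.mem_reverse] at hz
  rcases hz with hz | hz
  · exact hpa z hz hzS
  · rw [Walk.support_cons, List.mem_cons] at hz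
    rcases hz with rfl | hz
    · exact hpa z pa.start_mem_support hzS
    · exact hpb z hz hzS

private lemma side_ne {A B S : Set V} (hsep : Separates G A B S) {v : V}
    (hv : sideOf G S A v) (hw : sideOf G S B v) : False := by
  obtain ⟨a, ha, pa, hpa⟩ := hv
  obtain ⟨b, hb, pb, hpb⟩ := hw
  obtain ⟨z, hz, hzS⟩ := hsep a ha b hb (pa.reverse.append pb)
  rw [Walk.mem_support_append_iff, Walk.support_reverse, List.mem_reverse] at hz
  rcases hz with hz | hz
  · exact hpa z hz hzS
  · exact hpb z hz hzS

private lemma attach_side {A B S : Set V} (hsep : Separates G A B S)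
    (hmin : ∀ S' ⊆ S, Separates G A B S' → S' = S) {s : V} (hs : s ∈ S) :
    ∃ c ∈ A, ∃ w : G.Walk s c, ∀ u ∈ w.support, u = s ∨ sideOf G S A u := by
  classical
  have hne : ¬ Separates G A B (S \ {s}) := by
    intro hsep'
    rw [← hmin _ Set.diff_subset hsep'] at hs
    simp at hs
  unfold Separates at hne
  push_neg at hne
  obtain ⟨a, ha, b, hb, p, hp⟩ := hne
  obtain ⟨z, hzsup, hzS⟩ := hsep a ha b hb p
  have hzs : z = s := by
    by_contra hzs
    exact hp z hzsup ⟨hzS, hzs⟩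
  subst hzs
  -- z = s ∈ p.support
  set q : G.Walk z a := (p.takeUntil z hzsup).reverse with hq
  have hqS : ∀ u ∈ q.support, u ∈ S → u = z := by
    intro u hu huS
    rw [hq, Walk.support_reverse, List.mem_reverse] at hu
    by_contra hus
    exact hp u (Walk.support_takeUntil_subset p hzsup hu) ⟨huS, hus⟩
  have hqcount : q.support.count z = 1 := by
    rw [hq, Walk.support_reverse, List.count_reverse]
    exact p.count_support_takeUntil_eq_one hzsup
  refine ⟨a, ha, q, ?_⟩
  intro u hu
  by_cases hus : u = z
  · exact Or.inl hus
  right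
  set r := q.dropUntil u hu with hr
  have hzr : z ∉ r.support := by
    intro hzr
    rw [Walk.support_eq_cons r] at hzr
    rcases List.mem_cons.mp hzr with h1 | h1
    · exact hus h1.symm
    · have hspec := q.take_spec hu
      have : q.support = (q.takeUntil u hu).support ++ r.support.tail := by
        rw [← Walk.support_append, hspec]
      rw [this, List.count_append] at hqcount
      have c1 : 1 ≤ (q.takeUntil u hu).support.count z :=
        List.count_pos_iff.mpr (q.takeUntil u hu).start_mem_support
      have c2 : 1 ≤ r.support.tail.count z := List.count_pos_iff.mpr h1
      omega
  refine ⟨a, ha, r, ?_⟩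
  intro w hw hwS
  have hwq : w ∈ q.support := Walk.support_dropUntil_subset q hu hw
  have := hqS w hwq hwS
  subst this
  exact hzr hw

private lemma induce_walk_exists {A : Set V} (hconn : (G.induce A).Connected) {a b : V}
    (ha : a ∈ A) (hb : b ∈ A) : ∃ w : G.Walk a b, ∀ u ∈ w.support, u ∈ A := by
  suffices h : ∀ (c d : {x // x ∈ A}) (w : (G.induce A).Walk c d),
      ∃ w' : G.Walk c.1 d.1, ∀ u ∈ w'.support, u ∈ A by
    obtain ⟨w⟩ := hconn.preconnected ⟨a, ha⟩ ⟨b, hb⟩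
    exact h ⟨a, ha⟩ ⟨b, hb⟩ w
  intro c d w
  induction w with
  | nil => exact ⟨.nil, by simp [Subtype.coe_prop]⟩
  | cons h q ih =>
    obtain ⟨w', hw'⟩ := ih
    refine ⟨.cons (by simpa using h) w', ?_⟩
    intro u hu
    rw [Walk.support_cons, List.mem_cons] at hu
    rcases hu with rfl | hu
    · exact Subtype.coe_prop _
    · exact hw' u hu


end helpers

universe u

theorem stmt8 {V : Type u} (G : SimpleGraph V) (hchordal : IsChordal G) (A B : Set V) (hA : A.Nonempty) (hB : B.Nonempty)
    (hAconn : (G.induce A).Connected) (hBconn : (G.induce B).Connected)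
    (hdisj : Disjoint A B) (hnoedge : ∀ a ∈ A, ∀ b ∈ B, ¬ G.Adj a b)
    (S : Set V) (hmin : IsMinimalSeparator G A B S) (hSdisj : Disjoint S (A ∪ B)) :
    G.IsClique S := by
  classical
  obtain ⟨hsep, hminimal⟩ := hmin
  rw [isClique_iff]
  intro x hx y hy hxy
  by_contra hnadj
  have hsepBA : Separates G B A S := by
    intro b hb a ha p
    obtain ⟨z, hz, hzS⟩ := hsep a ha b hb p.reverse
    rw [Walk.support_reverse, List.mem_reverse] at hz
    exact ⟨z, hz, hzS⟩
  have hminBA : ∀ S' ⊆ S, Separates G B A S' → S' = S := by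
    intro S' hsub hsep'
    refine hminimal S' hsub ?_
    intro a ha b hb p
    obtain ⟨z, hz, hzS⟩ := hsep' b hb a ha p.reverse
    rw [Walk.support_reverse, List.mem_reverse] at hz
    exact ⟨z, hz, hzS⟩
  obtain ⟨ax, haxA, wax, hwax⟩ := attach_side hsep hminimal hx
  obtain ⟨ay, hayA, way, hway⟩ := attach_side hsep hminimal hy
  obtain ⟨bx, hbxB, wbx, hwbx⟩ := attach_side hsepBA hminBA hx
  obtain ⟨byy, hbyB, wby, hwby⟩ := attach_side hsepBA hminBA hy
  obtain ⟨wa, hwa⟩ := induce_walk_exists hAconn haxA hayA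
  obtain ⟨wb, hwb⟩ := induce_walk_exists hBconn hbxB hbyB
  have hAside : ∀ u ∈ A, sideOf G S A u := by
    intro u hu
    refine ⟨u, hu, .nil, ?_⟩
    intro z hz
    simp only [Walk.support_nil, List.mem_singleton] at hz
    subst hz
    exact fun h => Set.disjoint_left.mp hSdisj h (Or.inl hu)
  have hBside : ∀ u ∈ B, sideOf G S B u := by
    intro u hu
    refine ⟨u, hu, .nil, ?_⟩
    intro z hz
    simp only [Walk.support_nil, List.mem_singleton] at hz
    subst hz
    exact fun h => Set.disjoint_left.mp hSdisj h (Or.inr hu)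
  have hw0A : ∀ z ∈ (wax.append (wa.append way.reverse)).support,
      z = x ∨ z = y ∨ sideOf G S A z := by
    intro z hz
    rw [Walk.mem_support_append_iff, Walk.mem_support_append_iff, Walk.support_reverse,
      List.mem_reverse] at hz
    rcases hz with hz | hz | hz
    · rcases hwax z hz with h | h
      · exact Or.inl h
      · exact Or.inr (Or.inr h)
    · exact Or.inr (Or.inr (hAside z (hwa z hz)))
    · rcases hway z hz with h | h
      · exact Or.inr (Or.inl h)
      · exact Or.inr (Or.inr h)
  have hw0B : ∀ z ∈ (wbx.append (wb.append wby.reverse)).support,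
      z = x ∨ z = y ∨ sideOf G S B z := by
    intro z hz
    rw [Walk.mem_support_append_iff, Walk.mem_support_append_iff, Walk.support_reverse,
      List.mem_reverse] at hz
    rcases hz with hz | hz | hz
    · rcases hwbx z hz with h | h
      · exact Or.inl h
      · exact Or.inr (Or.inr h)
    · exact Or.inr (Or.inr (hBside z (hwb z hz)))
    · rcases hwby z hz with h | h
      · exact Or.inr (Or.inl h)
      · exact Or.inr (Or.inr h)
  obtain ⟨P, hPpath, hPsup, hPchord⟩ := exists_min_path _ _ hw0A
  obtain ⟨Q, hQpath, hQsup, hQchord⟩ := exists_min_path _ _ hw0B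
  set p := P.length with hp
  set q := Q.length with hq
  have hP0 : P.getVert 0 = x := P.getVert_zero
  have hPy : P.getVert p = y := P.getVert_length
  have hQ0 : Q.getVert 0 = x := Q.getVert_zero
  have hQy : Q.getVert q = y := Q.getVert_length
  have hp2 : 2 ≤ p := by
    have h0 : p ≠ 0 := by
      intro h0
      apply hxy
      have h1 : P.getVert 0 = P.getVert p := by rw [h0]
      rw [hP0, hPy] at h1
      exact h1
    have h1 : p ≠ 1 := by
      intro h1
      have h2 := P.adj_getVert_succ (i := 0) (by omega)
      rw [hP0, (by omega : (0:ℕ) + 1 = p), hPy] at h2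
      exact hnadj h2
    omega
  have hq2 : 2 ≤ q := by
    have h0 : q ≠ 0 := by
      intro h0
      apply hxy
      have h1 : Q.getVert 0 = Q.getVert q := by rw [h0]
      rw [hQ0, hQy] at h1
      exact h1
    have h1 : q ≠ 1 := by
      intro h1
      have h2 := Q.adj_getVert_succ (i := 0) (by omega)
      rw [hQ0, (by omega : (0:ℕ) + 1 = q), hQy] at h2
      exact hnadj h2
    omega
  have hPint : ∀ k, 0 < k → k < p → sideOf G S A (P.getVert k) := by
    intro k h0 hk
    have hmem : P.getVert k ∈ P.support :=
      Walk.mem_support_iff_exists_getVert.2 ⟨k, rfl, by omega⟩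
    rcases hPsup _ hmem with h | h | h
    · exfalso
      have := getVert_inj hPpath (a := k) (b := 0) (by omega) (by omega) (by rw [hP0]; exact h)
      omega
    · exfalso
      have := getVert_inj hPpath (a := k) (b := p) (by omega) (by omega) (by rw [hPy]; exact h)
      omega
    · exact h
  have hQint : ∀ k, 0 < k → k < q → sideOf G S B (Q.getVert k) := by
    intro k h0 hk
    have hmem : Q.getVert k ∈ Q.support :=
      Walk.mem_support_iff_exists_getVert.2 ⟨k, rfl, by omega⟩
    rcases hQsup _ hmem with h | h | h
    · exfalso
      have := getVert_inj hQpath (a := k) (b := 0) (by omega) (by omega) (by rw [hQ0]; exact h)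
      omega
    · exfalso
      have := getVert_inj hQpath (a := k) (b := q) (by omega) (by omega) (by rw [hQy]; exact h)
      omega
    · exact h
  set n := p + q with hn
  set g : ℕ → V := fun k => if k ≤ p then P.getVert k else Q.getVert (n - k) with hg
  have hgle : ∀ k, k ≤ p → g k = P.getVert k := by
    intro k hk
    simp only [hg]
    exact if_pos hk
  have hggt : ∀ k, p < k → g k = Q.getVert (n - k) := by
    intro k hk
    simp only [hg]
    exact if_neg (by omega)
  -- injectivity on [0, n)
  have haux : ∀ a b, a ≤ p → p < b → b < n → g a ≠ g b := by
    intro a b ha hb hbn heq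
    rw [hgle a ha, hggt b hb] at heq
    have hbint : sideOf G S B (Q.getVert (n - b)) := hQint (n - b) (by omega) (by omega)
    rcases Nat.eq_zero_or_pos a with rfl | ha0
    · rw [hP0] at heq
      have : sideOf G S B x := by rw [heq]; exact hbint
      exact sideOf_not_mem this hx
    by_cases hap : a = p
    · rw [hap, hPy] at heq
      have : sideOf G S B y := by rw [heq]; exact hbint
      exact sideOf_not_mem this hy
    · have : sideOf G S B (P.getVert a) := by rw [heq]; exact hbint
      exact side_ne hsep (hPint a ha0 (by omega)) this
  have hinj : ∀ a b, a < n → b < n → g a = g b → a = b := by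
    intro a b han hbn heq
    by_cases hap : a ≤ p <;> by_cases hbp : b ≤ p
    · rw [hgle a hap, hgle b hbp] at heq
      exact getVert_inj hPpath (by omega) (by omega) heq
    · exact absurd heq (haux a b hap (by omega) hbn)
    · exact absurd heq.symm (haux b a hbp (by omega) han)
    · rw [hggt a (by omega), hggt b (by omega)] at heq
      have := getVert_inj hQpath (a := n - a) (b := n - b) (by omega) (by omega) heq
      omega
  -- consecutive adjacency
  have hconsec : ∀ a, a < n → G.Adj (g a) (g ((a + 1) % n)) := by
    intro a han
    by_cases h1 : a + 1 ≤ p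
    · rw [Nat.mod_eq_of_lt (by omega), hgle a (by omega), hgle (a + 1) h1]
      exact P.adj_getVert_succ (by omega)
    by_cases h2 : a = p
    · rw [Nat.mod_eq_of_lt (by omega), hgle a (by omega), hggt (a + 1) (by omega), h2, hPy]
      rw [(by omega : n - (p + 1) = q - 1)]
      have h3 := Q.adj_getVert_succ (i := q - 1) (by omega)
      rw [(by omega : q - 1 + 1 = q), hQy] at h3
      exact h3.symm
    by_cases h4 : a + 1 < n
    · rw [Nat.mod_eq_of_lt (by omega), hggt a (by omega), hggt (a + 1) (by omega)]
      have h3 := Q.adj_getVert_succ (i := n - a - 1) (by omega)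
      rw [(by omega : n - a - 1 + 1 = n - a)] at h3
      rw [(by omega : n - (a + 1) = n - a - 1)]
      exact h3.symm
    · have hmod : (a + 1) % n = 0 := by
        rw [(by omega : a + 1 = n)]
        exact Nat.mod_self n
      rw [hmod, hggt a (by omega), hgle 0 (by omega), hP0, (by omega : n - a = 1)]
      have h3 := Q.adj_getVert_succ (i := 0) (by omega)
      rw [hQ0] at h3
      simpa using h3.symm
  -- chords
  have hchordlt : ∀ a b, a < b → b < n → G.Adj (g a) (g b) →
      b = a + 1 ∨ (a = 0 ∧ b = n - 1) := by
    intro a b hab hbn hadj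
    by_cases hbp : b ≤ p
    · left
      rw [hgle a (by omega), hgle b hbp] at hadj
      by_contra hne
      exact hPchord a b (by omega) (by omega) hadj
    by_cases hap : a ≤ p
    · rw [hgle a hap, hggt b (by omega)] at hadj
      rcases Nat.eq_zero_or_pos a with rfl | ha0
      · rw [hP0] at hadj
        right
        refine ⟨rfl, ?_⟩
        by_contra hbne
        refine hQchord 0 (n - b) (by omega) (by omega) ?_
        rw [hQ0]
        exact hadj
      by_cases hap2 : a = p
      · left
        rw [hap2, hPy] at hadj
        by_contra hne
        refine hQchord (n - b) q (by omega) (by omega) ?_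
        rw [hQy]
        exact hadj.symm
      · exact (side_no_adj hsep (hPint a (by omega) (by omega))
          (hQint (n - b) (by omega) (by omega)) hadj).elim
    · left
      rw [hggt a (by omega), hggt b (by omega)] at hadj
      by_contra hne
      exact hQchord (n - b) (n - a) (by omega) (by omega) hadj.symm
  -- apply chordality
  have h4n : 4 ≤ n := by omega
  haveI : NeZero n := ⟨by omega⟩
  haveI : Fact (1 < n) := ⟨by omega⟩
  have hkey : ∀ i j : ZMod n, j = i + 1 ↔ j.val = (i.val + 1) % n := by
    intro i j
    constructor
    · rintro rfl
      rw [ZMod.val_add, ZMod.val_one]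
    · intro h
      apply ZMod.val_injective
      rw [h, ZMod.val_add, ZMod.val_one]
  refine hchordal n h4n (fun i => g i.val) ?_ ?_
  · intro i j hij
    exact ZMod.val_injective n (hinj _ _ (ZMod.val_lt i) (ZMod.val_lt j) hij)
  · intro i j
    rw [hkey i j, hkey j i]
    constructor
    · intro hadj
      rcases Nat.lt_trichotomy i.val j.val with h | h | h
      · rcases hchordlt _ _ h (ZMod.val_lt j) hadj with h1 | ⟨h1, h2⟩
        · left
          rw [h1]
          exact (Nat.mod_eq_of_lt (h1 ▸ ZMod.val_lt j)).symm
        · right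
          rw [h2, h1, (by omega : n - 1 + 1 = n)]
          exact (Nat.mod_self n).symm
      · exact (hadj.ne (congrArg g (congrArg ZMod.val (ZMod.val_injective n h)))).elim
      · rcases hchordlt _ _ h (ZMod.val_lt i) hadj.symm with h1 | ⟨h1, h2⟩
        · right
          rw [h1]
          exact (Nat.mod_eq_of_lt (h1 ▸ ZMod.val_lt i)).symm
        · left
          rw [h2, h1, (by omega : n - 1 + 1 = n)]
          exact (Nat.mod_self n).symm
    · intro h
      rcases h with h | h
      · have := hconsec i.val (ZMod.val_lt i)
        rwa [← h] at this
      · have := hconsec j.val (ZMod.val_lt j)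
        rw [← h] at this
        exact this.symm
end
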